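/- arXiv:2208.04800 — 2 statements merged into one kernel-verified Lean document; each statement's English description precedes it below -/
import Mathlib

section
/- For all β ≥ 0: (i) for every integer k ≥ 2, ℙ_β( 0 ∼ S_{≥k} ) ≤ β·50^d·k^{−d}, where S_{≥k} = {x ∈ ℤ^d : ‖x‖_∞ ≥ k}; and (ii) for every m ∈ ℕ_{>0}, every vertex x ∈ V_0^m, and every w ∈ ℤ^d with ‖w‖_∞ ≥ 2, ℙ_β( x ∼ V_w^m ) ≤ β·4^{2d} / ( ‖w‖_∞^{2d}·m^d ). -/
open MeasureTheory ProbabilityTheory ENNReal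

noncomputable section

/-- Configuration space of long-range percolation on `ℤ^d`:
each unordered pair of vertices carries a `Bool` (open or closed). -/
abbrev PercConfig (d : ℕ) := Sym2 (Fin d → ℤ) → Bool

/-- The sup norm `‖x‖_∞` of an integer vector, as a natural number. -/
def supNorm {d : ℕ} (x : Fin d → ℤ) : ℕ := Finset.univ.sup fun i => (x i).natAbs

/-- The Euclidean norm `‖x‖₂` of an integer vector. -/
def l2norm {d : ℕ} (x : Fin d → ℤ) : ℝ := Real.sqrt (∑ i, ((x i : ℝ)) ^ 2)

/-- The half-open unit cube `u + [0,1)^d` in `ℝ^d`. -/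
def unitCube {d : ℕ} (u : Fin d → ℤ) : Set (Fin d → ℝ) :=
  Set.univ.pi fun i => Set.Ico (u i : ℝ) ((u i : ℝ) + 1)

/-- `∫_{u+C} ∫_{v+C} ‖x−y‖₂^{−2d} dx dy` with respect to Lebesgue measure,
as an extended nonnegative real (it is `∞` exactly when `‖u−v‖_∞ ≤ 1`). -/
def edgeIntegral (d : ℕ) (u v : Fin d → ℤ) : ℝ≥0∞ :=
  ∫⁻ x in unitCube u, ∫⁻ y in unitCube v,
    ENNReal.ofReal ((Real.sqrt (∑ i, (x i - y i) ^ 2)) ^ (-(2 * (d : ℝ))))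

/-- The connection probability
`p(β,{u,v}) = 1 − exp(−β ∫_{u+C} ∫_{v+C} ‖x−y‖₂^{−2d} dx dy)`,
equal to `1` when the integral diverges. -/
def pConn (d : ℕ) (β : ℝ) (u v : Fin d → ℤ) : ℝ :=
  if edgeIntegral d u v = ⊤ then 1
  else 1 - Real.exp (-β * (edgeIntegral d u v).toReal)

/-- `P` is an independent bond percolation measure on `ℤ^d` in which each edge `{u,v}`
is open with probability `f u v`, independently over edges. -/
structure IsPercolation (d : ℕ) (f : (Fin d → ℤ) → (Fin d → ℤ) → ℝ)
    (P : Measure (PercConfig d)) : Prop where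
  isProb : IsProbabilityMeasure P
  indep : iIndepFun
    (fun (e : Sym2 (Fin d → ℤ)) (ω : PercConfig d) => ω e) P
  openProb : ∀ u v : Fin d → ℤ, u ≠ v →
    P {ω | ω s(u, v) = true} = ENNReal.ofReal (f u v)

/-- `P` is the long-range percolation measure `ℙ_β` on `ℤ^d`. -/
def IsLRP (d : ℕ) (β : ℝ) (P : Measure (PercConfig d)) : Prop :=
  IsPercolation d (pConn d β) P

/-- The graph distance `D_A(x,y)` inside `A ⊆ ℤ^d`, using only open edges with both
endpoints in `A`; it is `∞` if there is no such path. -/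
def graphDist {d : ℕ} (ω : PercConfig d) (A : Set (Fin d → ℤ))
    (x y : Fin d → ℤ) : ℕ∞ :=
  sInf {n : ℕ∞ | ∃ m : ℕ, n = m ∧ ∃ γ : ℕ → Fin d → ℤ,
    γ 0 = x ∧ γ m = y ∧ (∀ i ≤ m, γ i ∈ A) ∧
    ∀ i < m, γ i ≠ γ (i + 1) ∧ ω s(γ i, γ (i + 1)) = true}

/-- The box `V_u^n = n·u + {0,…,n−1}^d`. -/
def latticeBox (d : ℕ) (u : Fin d → ℤ) (n : ℕ) : Set (Fin d → ℤ) :=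
  {x | ∀ i, (n : ℤ) * u i ≤ x i ∧ x i < (n : ℤ) * u i + (n : ℤ)}

/-- The box `{0,…,n−1}^d`. -/
def stdBox (d : ℕ) (n : ℕ) : Set (Fin d → ℤ) := latticeBox d 0 n

/-- The expected graph distance `𝔼[D_A(x,y)]`, as an extended nonnegative real. -/
def expDist {d : ℕ} (P : Measure (PercConfig d)) (A : Set (Fin d → ℤ))
    (x y : Fin d → ℤ) : ℝ≥0∞ :=
  ∫⁻ ω, (graphDist ω A x y : ℝ≥0∞) ∂P

/-- The (inner) diameter of `A`: `diam(A) = max_{x,y ∈ A} D_A(x,y)`. -/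
def diamIn {d : ℕ} (ω : PercConfig d) (A : Set (Fin d → ℤ)) : ℕ∞ :=
  ⨆ x ∈ A, ⨆ y ∈ A, graphDist ω A x y

/-- `Λ(n,β) = max_{u,v ∈ {0,…,n−1}^d} 𝔼_β[D_{V_0^n}(u,v)] + 1`, for the measure `P = ℙ_β`. -/
def Lambda (d : ℕ) (P : Measure (PercConfig d)) (n : ℕ) : ℝ≥0∞ :=
  (⨆ u ∈ stdBox d n, ⨆ v ∈ stdBox d n, expDist P (stdBox d n) u v) + 1

/-- The distance exponent `θ(β) = lim_{n→∞} log Λ(n,β)/log n = inf_{n≥2} log Λ(n,β)/log n`. -/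
def theta (d : ℕ) (P : Measure (PercConfig d)) : ℝ :=
  ⨅ n : {m : ℕ // 2 ≤ m}, Real.log (Lambda d P n.1).toReal / Real.log (n.1 : ℝ)

section Statement4Aux

variable {d : ℕ}

lemma volume_unitCube (u : Fin d → ℤ) : MeasureTheory.volume (unitCube u) = 1 := by
  rw [unitCube, volume_pi_pi]
  simp [Real.volume_Ico]

lemma integrand_le (s : ℕ) (hs : 1 ≤ s) {u v : Fin d → ℤ} (i : Fin d)
    (hi : (s : ℤ) + 1 ≤ |u i - v i|) {x y : Fin d → ℝ}
    (hx : x ∈ unitCube u) (hy : y ∈ unitCube v) :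
    ENNReal.ofReal ((Real.sqrt (∑ j, (x j - y j) ^ 2)) ^ (-(2 * (d : ℝ))))
      ≤ ENNReal.ofReal (((s : ℝ) ^ (2 * d))⁻¹) := by
  have hxi : (u i : ℝ) ≤ x i ∧ x i < (u i : ℝ) + 1 := hx i (Set.mem_univ i)
  have hyi : (v i : ℝ) ≤ y i ∧ y i < (v i : ℝ) + 1 := hy i (Set.mem_univ i)
  have hs0 : (0 : ℝ) < (s : ℝ) := by exact_mod_cast hs
  have hs' : (s : ℝ) ≤ |x i - y i| := by
    have h2 : ((s : ℝ) + 1 ≤ (u i : ℝ) - v i) ∨ ((s : ℝ) + 1 ≤ (v i : ℝ) - u i) := by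
      rcases le_abs.mp hi with h | h
      · left; exact_mod_cast h
      · right
        have : (s : ℤ) + 1 ≤ v i - u i := by omega
        exact_mod_cast this
    rcases h2 with h | h
    · rw [abs_of_nonneg (by linarith)]; linarith
    · rw [abs_of_nonpos (by linarith)]; linarith
  have hsum : ((s : ℝ)) ^ 2 ≤ ∑ j, (x j - y j) ^ 2 := by
    have h1 : (s : ℝ) ^ 2 ≤ (x i - y i) ^ 2 := by
      have h2 := sq_abs (x i - y i)
      nlinarith [abs_nonneg (x i - y i)]
    exact h1.trans (Finset.single_le_sum (f := fun j => (x j - y j) ^ 2)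
      (fun j _ => sq_nonneg _) (Finset.mem_univ i))
  have hsqrt : (s : ℝ) ≤ Real.sqrt (∑ j, (x j - y j) ^ 2) := by
    calc (s : ℝ) = Real.sqrt ((s : ℝ) ^ 2) := (Real.sqrt_sq hs0.le).symm
      _ ≤ _ := Real.sqrt_le_sqrt hsum
  have hr : (Real.sqrt (∑ j, (x j - y j) ^ 2)) ^ (-(2 * (d : ℝ)))
      ≤ ((s : ℝ)) ^ (-(2 * (d : ℝ))) :=
    Real.rpow_le_rpow_of_nonpos hs0 hsqrt (neg_nonpos.mpr (by positivity))
  have heq : ((s : ℝ)) ^ (-(2 * (d : ℝ))) = ((s : ℝ) ^ (2 * d))⁻¹ := by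
    rw [show (-(2 * (d : ℝ))) = -((2 * d : ℕ) : ℝ) by push_cast; ring,
      Real.rpow_neg hs0.le, Real.rpow_natCast]
  exact ENNReal.ofReal_le_ofReal (heq ▸ hr)

lemma edgeIntegral_le (s : ℕ) (hs : 1 ≤ s) {u v : Fin d → ℤ} (i : Fin d)
    (hi : (s : ℤ) + 1 ≤ |u i - v i|) :
    edgeIntegral d u v ≤ ENNReal.ofReal (((s : ℝ) ^ (2 * d))⁻¹) := by
  set C := ENNReal.ofReal (((s : ℝ) ^ (2 * d))⁻¹) with hC
  have hinner : ∀ x ∈ unitCube u,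
      (∫⁻ y in unitCube v,
        ENNReal.ofReal ((Real.sqrt (∑ j, (x j - y j) ^ 2)) ^ (-(2 * (d : ℝ))))) ≤ C := by
    intro x hx
    calc (∫⁻ y in unitCube v,
          ENNReal.ofReal ((Real.sqrt (∑ j, (x j - y j) ^ 2)) ^ (-(2 * (d : ℝ)))))
        ≤ ∫⁻ _ in unitCube v, C :=
          setLIntegral_mono measurable_const fun y hy => integrand_le s hs i hi hx hy
      _ = C * volume (unitCube v) := setLIntegral_const _ _
      _ = C := by rw [volume_unitCube, mul_one]
  calc edgeIntegral d u v
      ≤ ∫⁻ _ in unitCube u, C := setLIntegral_mono measurable_const hinner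
    _ = C * volume (unitCube u) := setLIntegral_const _ _
    _ = C := by rw [volume_unitCube, mul_one]

lemma ofReal_pConn_le {β c : ℝ} (hβ : 0 ≤ β) (hc : 0 ≤ c) {u v : Fin d → ℤ}
    (h : edgeIntegral d u v ≤ ENNReal.ofReal c) :
    ENNReal.ofReal (pConn d β u v) ≤ ENNReal.ofReal (β * c) := by
  have hne : edgeIntegral d u v ≠ ⊤ := ne_top_of_le_ne_top ENNReal.ofReal_ne_top h
  rw [pConn, if_neg hne]
  refine ENNReal.ofReal_le_ofReal ?_
  set t := (edgeIntegral d u v).toReal with htdef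
  have ht0 : 0 ≤ t := ENNReal.toReal_nonneg
  have htc : t ≤ c := by
    have := ENNReal.toReal_mono ENNReal.ofReal_ne_top h
    rwa [ENNReal.toReal_ofReal hc] at this
  have hexp := Real.add_one_le_exp (-(β * t))
  have h1 : 1 - Real.exp (-β * t) ≤ β * t := by
    rw [neg_mul]; linarith
  calc 1 - Real.exp (-β * t) ≤ β * t := h1
    _ ≤ β * c := by nlinarith

lemma tsum_pi_prod (f : ℤ → ℝ≥0∞) :
    ∀ n : ℕ, ∑' y : Fin n → ℤ, ∏ i, f (y i) = (∑' a : ℤ, f a) ^ n := by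
  intro n
  induction n with
  | zero =>
    rw [pow_zero]
    rw [tsum_eq_single (fun i => (0 : ℤ)) (fun b hb => absurd (Subsingleton.elim b _) hb)]
    simp
  | succ n ih =>
    have he := (Fin.consEquiv (fun _ : Fin (n + 1) => ℤ)).tsum_eq
      (fun y : Fin (n + 1) → ℤ => ∏ i, f (y i))
    rw [← he, ENNReal.tsum_prod']
    have hcons : ∀ (a : ℤ) (z : Fin n → ℤ),
        (∏ i, f (((Fin.consEquiv (fun _ : Fin (n + 1) => ℤ)) (a, z)) i))
          = f a * ∏ i, f (z i) := by
      intro a z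
      rw [Fin.prod_univ_succ]
      simp [Fin.consEquiv]
    calc (∑' (a : ℤ) (z : Fin n → ℤ),
          ∏ i, f (((Fin.consEquiv (fun _ : Fin (n + 1) => ℤ)) (a, z)) i))
        = ∑' (a : ℤ), f a * ∑' z : Fin n → ℤ, ∏ i, f (z i) := by
          refine tsum_congr fun a => ?_
          rw [← ENNReal.tsum_mul_left]
          exact tsum_congr fun z => hcons a z
      _ = (∑' z : Fin n → ℤ, ∏ i, f (z i)) * ∑' a : ℤ, f a := by
          rw [ENNReal.tsum_mul_right]; ring
      _ = (∑' a : ℤ, f a) ^ (n + 1) := by rw [ih, pow_succ]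

lemma telescope_sum (k N : ℕ) (hk : 1 ≤ k) :
    ∑ i ∈ Finset.range N, (((k + 1 + i : ℕ) : ℝ) ^ 2)⁻¹ ≤ 1 / k := by
  have hk1 : (1 : ℝ) ≤ (k : ℝ) := by exact_mod_cast hk
  have hstep : ∀ i ∈ Finset.range N, (((k + 1 + i : ℕ) : ℝ) ^ 2)⁻¹ ≤
      1 / ((k : ℝ) + (i : ℕ)) - 1 / ((k : ℝ) + ((i + 1 : ℕ) : ℝ)) := by
    intro i _
    have hi0 : (0 : ℝ) ≤ (i : ℝ) := Nat.cast_nonneg i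
    have ha : (0 : ℝ) < (k : ℝ) + i := by linarith
    have ha1 : (0 : ℝ) < (k : ℝ) + i + 1 := by linarith
    have hcast : (((k + 1 + i : ℕ)) : ℝ) = ((k : ℝ) + i) + 1 := by push_cast; ring
    have hcast2 : ((k : ℝ) + ((i + 1 : ℕ) : ℝ)) = ((k : ℝ) + i) + 1 := by push_cast; ring
    rw [hcast, hcast2]
    have h1 : 1 / ((k : ℝ) + i) - 1 / (((k : ℝ) + i) + 1)
        = (((k : ℝ) + i) * (((k : ℝ) + i) + 1))⁻¹ := by
      field_simp
      ring
    rw [h1]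
    apply inv_anti₀ (by positivity)
    nlinarith
  calc ∑ i ∈ Finset.range N, (((k + 1 + i : ℕ) : ℝ) ^ 2)⁻¹
      ≤ ∑ i ∈ Finset.range N,
          (1 / ((k : ℝ) + (i : ℕ)) - 1 / ((k : ℝ) + ((i + 1 : ℕ) : ℝ))) :=
        Finset.sum_le_sum hstep
    _ = 1 / ((k : ℝ) + ((0 : ℕ) : ℝ)) - 1 / ((k : ℝ) + (N : ℝ)) :=
        Finset.sum_range_sub' (fun i : ℕ => 1 / ((k : ℝ) + (i : ℝ))) N
    _ ≤ 1 / k := by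
        have h0 : (0 : ℝ) ≤ 1 / ((k : ℝ) + N) := by positivity
        have : ((0 : ℕ) : ℝ) = 0 := by norm_num
        rw [this, add_zero]
        linarith

lemma nat_sum_bound (k : ℕ) (hk : 2 ≤ k) :
    (∑' m : ℕ, ENNReal.ofReal ((((max m k : ℕ)) : ℝ) ^ 2)⁻¹)
      ≤ ENNReal.ofReal (((k : ℝ) + 1) / (k : ℝ) ^ 2 + 1 / k) := by
  rw [ENNReal.tsum_eq_iSup_nat]
  refine iSup_le fun N => ?_
  have hsub : Finset.range N ⊆ Finset.range (k + 1 + N) := Finset.range_subset_range.mpr (by omega)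
  refine le_trans (Finset.sum_le_sum_of_subset hsub) ?_
  rw [← Finset.sum_range_add_sum_Ico _ (by omega : k + 1 ≤ k + 1 + N)]
  have h1 : (∑ m ∈ Finset.range (k + 1), ENNReal.ofReal ((((max m k : ℕ)) : ℝ) ^ 2)⁻¹)
      ≤ ENNReal.ofReal (((k : ℝ) + 1) / (k : ℝ) ^ 2) := by
    have hc : ∀ m ∈ Finset.range (k + 1),
        ENNReal.ofReal ((((max m k : ℕ)) : ℝ) ^ 2)⁻¹ = ENNReal.ofReal (((k : ℝ) ^ 2)⁻¹) := by
      intro m hm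
      have hmk : max m k = k := max_eq_right (Nat.lt_succ_iff.mp (Finset.mem_range.mp hm))
      rw [hmk]
    rw [Finset.sum_congr rfl hc, Finset.sum_const, Finset.card_range, nsmul_eq_mul]
    have : ((k + 1 : ℕ) : ℝ≥0∞) = ENNReal.ofReal ((k : ℝ) + 1) := by
      rw [← ENNReal.ofReal_natCast]; norm_num
    rw [this, ← ENNReal.ofReal_mul (by positivity)]
    apply ENNReal.ofReal_le_ofReal
    rw [div_eq_mul_inv]
  have h2 : (∑ m ∈ Finset.Ico (k + 1) (k + 1 + N),
        ENNReal.ofReal ((((max m k : ℕ)) : ℝ) ^ 2)⁻¹) ≤ ENNReal.ofReal (1 / k) := by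
    have hc : ∀ m ∈ Finset.Ico (k + 1) (k + 1 + N),
        ENNReal.ofReal ((((max m k : ℕ)) : ℝ) ^ 2)⁻¹ = ENNReal.ofReal (((m : ℝ)) ^ 2)⁻¹ := by
      intro m hm
      have : max m k = m := max_eq_left (by
        have := (Finset.mem_Ico.mp hm).1; omega)
      rw [this]
    rw [Finset.sum_congr rfl hc, Finset.sum_Ico_eq_sum_range]
    have hNN : k + 1 + N - (k + 1) = N := by omega
    rw [hNN]
    rw [← ENNReal.ofReal_sum_of_nonneg (fun i _ => by positivity)]
    apply ENNReal.ofReal_le_ofReal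
    have := telescope_sum k N (by omega)
    calc ∑ i ∈ Finset.range N, (((k + 1 + i : ℕ) : ℝ) ^ 2)⁻¹ ≤ 1 / k := this
      _ = 1 / k := rfl
  calc (∑ m ∈ Finset.range (k + 1), ENNReal.ofReal ((((max m k : ℕ)) : ℝ) ^ 2)⁻¹)
        + ∑ m ∈ Finset.Ico (k + 1) (k + 1 + N),
            ENNReal.ofReal ((((max m k : ℕ)) : ℝ) ^ 2)⁻¹
      ≤ ENNReal.ofReal (((k : ℝ) + 1) / (k : ℝ) ^ 2) + ENNReal.ofReal (1 / k) :=
        add_le_add h1 h2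
    _ = ENNReal.ofReal (((k : ℝ) + 1) / (k : ℝ) ^ 2 + 1 / k) := by
        rw [ENNReal.ofReal_add (by positivity) (by positivity)]

lemma int_sum_bound (k : ℕ) (hk : 2 ≤ k) :
    (∑' n : ℤ, ENNReal.ofReal ((((max n.natAbs k : ℕ)) : ℝ) ^ 2)⁻¹)
      ≤ ENNReal.ofReal (5 / (k : ℝ)) := by
  set g : ℤ → ℝ≥0∞ := fun n => ENNReal.ofReal ((((max n.natAbs k : ℕ)) : ℝ) ^ 2)⁻¹ with hg
  have hsurj : Function.Surjective
      (fun p : ℕ × Bool => (if p.2 then (p.1 : ℤ) else -(p.1 : ℤ))) := by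
    intro n
    rcases le_or_gt 0 n with h | h
    · exact ⟨(n.toNat, true), by simp [Int.toNat_of_nonneg h]⟩
    · refine ⟨(n.natAbs, false), ?_⟩
      show (if false = true then ((n.natAbs : ℤ)) else -(n.natAbs : ℤ)) = n
      rw [if_neg (by decide)]
      omega
  have hkpos : (0 : ℝ) < (k : ℝ) := by exact_mod_cast (by omega : 0 < k)
  calc ∑' n, g n
      ≤ ∑' p : ℕ × Bool, g (if p.2 then (p.1 : ℤ) else -(p.1 : ℤ)) :=
        ENNReal.tsum_le_tsum_comp_of_surjective hsurj g
    _ = ∑' (m : ℕ) (b : Bool), g (if b then (m : ℤ) else -(m : ℤ)) := ENNReal.tsum_prod'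
    _ = ∑' m : ℕ, (g (-(m : ℤ)) + g (m : ℤ)) := by
        refine tsum_congr fun m => ?_
        rw [tsum_bool]
        simp
    _ = (∑' m : ℕ, g (-(m : ℤ))) + ∑' m : ℕ, g ((m : ℤ)) := ENNReal.tsum_add
    _ = (∑' m : ℕ, ENNReal.ofReal ((((max m k : ℕ)) : ℝ) ^ 2)⁻¹)
        + ∑' m : ℕ, ENNReal.ofReal ((((max m k : ℕ)) : ℝ) ^ 2)⁻¹ := by
        congr 1 <;> exact tsum_congr fun m => by simp [hg]
    _ ≤ ENNReal.ofReal (((k : ℝ) + 1) / (k : ℝ) ^ 2 + 1 / k)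
        + ENNReal.ofReal (((k : ℝ) + 1) / (k : ℝ) ^ 2 + 1 / k) :=
        add_le_add (nat_sum_bound k hk) (nat_sum_bound k hk)
    _ = ENNReal.ofReal (2 * (((k : ℝ) + 1) / (k : ℝ) ^ 2 + 1 / k)) := by
        rw [← ENNReal.ofReal_add (by positivity) (by positivity)]; ring_nf
    _ ≤ ENNReal.ofReal (5 / (k : ℝ)) := by
        apply ENNReal.ofReal_le_ofReal
        have hk2 : (2 : ℝ) ≤ (k : ℝ) := by exact_mod_cast hk
        have hL : 2 * (((k : ℝ) + 1) / (k : ℝ) ^ 2 + 1 / k)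
            = (4 * (k : ℝ) + 2) / (k : ℝ) ^ 2 := by
          field_simp
          ring
        rw [hL, div_le_div_iff₀ (by positivity) hkpos]
        nlinarith

end Statement4Aux

/-- For all `β ≥ 0`: (i) for `k ≥ 2`, `ℙ_β(0 ∼ S_{≥k}) ≤ β·50^d·k^{−d}`;
(ii) for `m ≥ 1`, `x ∈ V_0^m` and `‖w‖_∞ ≥ 2`, `ℙ_β(x ∼ V_w^m) ≤ β·4^{2d}/(‖w‖_∞^{2d}·m^d)`. -/
theorem statement4 (d : ℕ) (hd : 1 ≤ d) (β : ℝ) (hβ : 0 ≤ β)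
    (P : Measure (PercConfig d)) (hP : IsLRP d β P) :
    (∀ k : ℕ, 2 ≤ k →
      P {ω | ∃ y : Fin d → ℤ, k ≤ supNorm y ∧ ω s(0, y) = true}
        ≤ ENNReal.ofReal (β * 50 ^ d / (k : ℝ) ^ d)) ∧
    (∀ m : ℕ, 1 ≤ m → ∀ x ∈ stdBox d m, ∀ w : Fin d → ℤ, 2 ≤ supNorm w →
      P {ω | ∃ y ∈ latticeBox d w m, x ≠ y ∧ ω s(x, y) = true}
        ≤ ENNReal.ofReal (β * 4 ^ (2 * d) / ((supNorm w : ℝ) ^ (2 * d) * (m : ℝ) ^ d))) := by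
  obtain ⟨hprob, hindep, hopen⟩ := hP
  haveI : Nonempty (Fin d) := ⟨⟨0, hd⟩⟩
  constructor
  · -- part (i)
    intro k hk
    have hk0 : (0 : ℝ) < (k : ℝ) := by exact_mod_cast (by omega : 0 < k)
    set f : ℤ → ℝ≥0∞ :=
      fun n => ENNReal.ofReal ((((max n.natAbs k : ℕ)) : ℝ) ^ 2)⁻¹ with hf
    have hsub : {ω : PercConfig d | ∃ y : Fin d → ℤ, k ≤ supNorm y ∧ ω s(0, y) = true}
        ⊆ ⋃ y : Fin d → ℤ, {ω : PercConfig d | k ≤ supNorm y ∧ ω s(0, y) = true} := by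
      rintro ω ⟨y, hy⟩
      exact Set.mem_iUnion.mpr ⟨y, hy⟩
    have hterm : ∀ y : Fin d → ℤ,
        P {ω : PercConfig d | k ≤ supNorm y ∧ ω s(0, y) = true}
          ≤ ENNReal.ofReal β * ENNReal.ofReal ((4 : ℝ) ^ d) * ∏ i, f (y i) := by
      intro y
      by_cases hky : k ≤ supNorm y
      · obtain ⟨i0, -, hi0⟩ := Finset.exists_mem_eq_sup Finset.univ Finset.univ_nonempty
          (fun i => (y i).natAbs)
        have hi0' : supNorm y = (y i0).natAbs := hi0
        have hj2 : 2 ≤ supNorm y := le_trans hk hky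
        have hy0 : (0 : Fin d → ℤ) ≠ y := by
          intro h
          have : y i0 = 0 := by rw [← h]; rfl
          rw [this] at hi0'
          simp at hi0'
          omega
        have hseteq : {ω : PercConfig d | k ≤ supNorm y ∧ ω s(0, y) = true}
            = {ω : PercConfig d | ω s(0, y) = true} := by
          ext ω; simp [hky]
        rw [hseteq, hopen 0 y hy0]
        -- edge integral bound with s = supNorm y - 1
        have habs : ((supNorm y - 1 : ℕ) : ℤ) + 1 ≤ |(0 : Fin d → ℤ) i0 - y i0| := by
          have h1 : |(0 : Fin d → ℤ) i0 - y i0| = ((y i0).natAbs : ℤ) := by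
            have : (0 : Fin d → ℤ) i0 - y i0 = -(y i0) := by simp
            rw [this, abs_neg, Int.abs_eq_natAbs]
          rw [h1, ← hi0']
          omega
        have hedge := edgeIntegral_le (supNorm y - 1) (by omega) i0 habs
        refine (ofReal_pConn_le hβ (by positivity) hedge).trans ?_
        have hrhs : ENNReal.ofReal β * ENNReal.ofReal ((4 : ℝ) ^ d) * ∏ i, f (y i)
            = ENNReal.ofReal (β * ((4 : ℝ) ^ d
                * ∏ i, ((((max (y i).natAbs k : ℕ)) : ℝ) ^ 2)⁻¹)) := by
          rw [ENNReal.ofReal_mul hβ, ENNReal.ofReal_mul (by positivity : (0:ℝ) ≤ (4:ℝ) ^ d),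
            ENNReal.ofReal_prod_of_nonneg (fun i _ => by positivity), mul_assoc]
        rw [hrhs]
        refine ENNReal.ofReal_le_ofReal (mul_le_mul_of_nonneg_left ?_ hβ)
        -- real inequality
        set j := supNorm y with hjdef
        have hjR : (2 : ℝ) ≤ (j : ℝ) := by exact_mod_cast hj2
        have hcast : (((j - 1 : ℕ)) : ℝ) = (j : ℝ) - 1 := by
          push_cast [Nat.cast_sub (by omega : 1 ≤ j)]; ring
        have hbase : (((j : ℝ) - 1) ^ 2)⁻¹ ≤ 4 * (((j : ℝ)) ^ 2)⁻¹ := by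
          have hj0 : (j : ℝ) ≠ 0 := by linarith
          have h4 : 4 * (((j : ℝ)) ^ 2)⁻¹ = (((j : ℝ) ^ 2) / 4)⁻¹ := by
            field_simp
          rw [h4]
          apply inv_anti₀ (by positivity)
          nlinarith
        have hfac : ∀ i, ((((j : ℝ)) ^ 2)⁻¹) ≤ ((((max (y i).natAbs k : ℕ)) : ℝ) ^ 2)⁻¹ := by
          intro i
          have hle : (((max (y i).natAbs k : ℕ)) : ℝ) ≤ (j : ℝ) := by
            have : max (y i).natAbs k ≤ j :=
              max_le (Finset.le_sup (f := fun i => (y i).natAbs) (Finset.mem_univ i)) hky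
            exact_mod_cast this
          have hpos : (0 : ℝ) < (((max (y i).natAbs k : ℕ)) : ℝ) := by
            have : 0 < max (y i).natAbs k := by omega
            exact_mod_cast this
          apply inv_anti₀ (by positivity)
          nlinarith
        calc ((((j - 1 : ℕ)) : ℝ) ^ (2 * d))⁻¹
            = ((((j : ℝ) - 1) ^ 2)⁻¹) ^ d := by rw [hcast, pow_mul, inv_pow]
          _ ≤ (4 * (((j : ℝ)) ^ 2)⁻¹) ^ d := by
              exact pow_le_pow_left₀ (by positivity) hbase d
          _ = (4 : ℝ) ^ d * ∏ _i : Fin d, (((j : ℝ)) ^ 2)⁻¹ := by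
              rw [mul_pow, Finset.prod_const]
              simp
          _ ≤ (4 : ℝ) ^ d * ∏ i, ((((max (y i).natAbs k : ℕ)) : ℝ) ^ 2)⁻¹ := by
              refine mul_le_mul_of_nonneg_left ?_ (by positivity)
              exact Finset.prod_le_prod (fun i _ => by positivity) (fun i _ => hfac i)
      · have : {ω : PercConfig d | k ≤ supNorm y ∧ ω s(0, y) = true} = ∅ := by
          ext ω; simp [hky]
        rw [this]
        simp
    calc P {ω : PercConfig d | ∃ y : Fin d → ℤ, k ≤ supNorm y ∧ ω s(0, y) = true}
        ≤ ∑' y : Fin d → ℤ, P {ω : PercConfig d | k ≤ supNorm y ∧ ω s(0, y) = true} :=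
          (measure_mono hsub).trans (measure_iUnion_le _)
      _ ≤ ∑' y : Fin d → ℤ,
            (ENNReal.ofReal β * ENNReal.ofReal ((4 : ℝ) ^ d) * ∏ i, f (y i)) :=
          ENNReal.tsum_le_tsum hterm
      _ = ENNReal.ofReal β * ENNReal.ofReal ((4 : ℝ) ^ d)
            * ∑' y : Fin d → ℤ, ∏ i, f (y i) := ENNReal.tsum_mul_left
      _ = ENNReal.ofReal β * ENNReal.ofReal ((4 : ℝ) ^ d) * (∑' a : ℤ, f a) ^ d := by
          rw [tsum_pi_prod f d]
      _ ≤ ENNReal.ofReal β * ENNReal.ofReal ((4 : ℝ) ^ d)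
            * (ENNReal.ofReal (5 / (k : ℝ))) ^ d := by
          gcongr
          exact int_sum_bound k hk
      _ = ENNReal.ofReal (β * ((4 : ℝ) ^ d * (5 / (k : ℝ)) ^ d)) := by
          rw [← ENNReal.ofReal_pow (by positivity), mul_assoc,
            ← ENNReal.ofReal_mul (by positivity : (0:ℝ) ≤ (4:ℝ) ^ d),
            ← ENNReal.ofReal_mul hβ]
      _ ≤ ENNReal.ofReal (β * 50 ^ d / (k : ℝ) ^ d) := by
          apply ENNReal.ofReal_le_ofReal
          rw [mul_div_assoc]
          refine mul_le_mul_of_nonneg_left ?_ hβ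
          have hb20 : (4 : ℝ) * (5 / (k : ℝ)) = 20 / (k : ℝ) := by ring
          have h1 : (4 : ℝ) ^ d * (5 / (k : ℝ)) ^ d = (20 / (k : ℝ)) ^ d := by
            rw [← mul_pow, hb20]
          have h2 : ((50 : ℝ)) ^ d / (k : ℝ) ^ d = (50 / (k : ℝ)) ^ d := (div_pow _ _ _).symm
          rw [h1, h2]
          apply pow_le_pow_left₀ (by positivity)
          gcongr
          · norm_num
    -- done part (i)
  · -- part (ii)
    intro m hm x hx w hw
    set s := supNorm w with hsdef
    obtain ⟨i0, -, hi0⟩ := Finset.exists_mem_eq_sup Finset.univ Finset.univ_nonempty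
      (fun i => (w i).natAbs)
    have hi0' : s = (w i0).natAbs := hi0
    have hmR : (0 : ℝ) < (m : ℝ) := by exact_mod_cast hm
    have hsR : (2 : ℝ) ≤ (s : ℝ) := by exact_mod_cast hw
    have hms1 : 1 ≤ m * (s - 1) := Nat.one_le_iff_ne_zero.mpr (by
      have : 1 ≤ s - 1 := by omega
      positivity)
    set B : Finset (Fin d → ℤ) :=
      Fintype.piFinset (fun i => Finset.Ico ((m : ℤ) * w i) ((m : ℤ) * w i + m)) with hB
    have hmemB : ∀ y : Fin d → ℤ, y ∈ B ↔ y ∈ latticeBox d w m := by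
      intro y
      simp only [hB, Fintype.mem_piFinset, Finset.mem_Ico, latticeBox, Set.mem_setOf_eq]
    set c0 : ℝ := (((m * (s - 1) : ℕ) : ℝ) ^ (2 * d))⁻¹ with hc0
    have hkey : ∀ y ∈ latticeBox d w m, x ≠ y ∧ edgeIntegral d x y ≤ ENNReal.ofReal c0 := by
      intro y hy
      have hxi := hx i0
      have hxi' : 0 ≤ x i0 ∧ x i0 < (m : ℤ) := by
        constructor
        · have := hxi.1; simpa using this
        · have := hxi.2; simpa using this
      have hyi := hy i0
      have habs : ((m * (s - 1) : ℕ) : ℤ) + 1 ≤ |x i0 - y i0| := by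
        have hcast : ((m * (s - 1) : ℕ) : ℤ) = (m : ℤ) * ((s : ℤ) - 1) := by
          push_cast [Nat.cast_sub (by omega : 1 ≤ s)]; ring
        rw [hcast]
        rcases Int.natAbs_eq (w i0) with hw0 | hw0
        · have hwi : w i0 = (s : ℤ) := by rw [hw0, ← hi0']
          refine le_abs.mpr (Or.inr ?_)
          have h1 : (m : ℤ) * (s : ℤ) ≤ y i0 := by rw [← hwi]; exact hyi.1
          have hm1 : (1 : ℤ) ≤ (m : ℤ) := by exact_mod_cast hm
          nlinarith [hxi'.2, h1]
        · have hwi : w i0 = -(s : ℤ) := by rw [hw0, ← hi0']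
          refine le_abs.mpr (Or.inl ?_)
          have h1 : y i0 < (m : ℤ) * w i0 + m := hyi.2
          rw [hwi] at h1
          have hm1 : (1 : ℤ) ≤ (m : ℤ) := by exact_mod_cast hm
          nlinarith [hxi'.1, h1]
      constructor
      · intro he
        rw [he, sub_self] at habs
        simp at habs
        omega
      · exact edgeIntegral_le (m * (s - 1)) hms1 i0 habs
    have hsub : {ω : PercConfig d | ∃ y ∈ latticeBox d w m, x ≠ y ∧ ω s(x, y) = true}
        ⊆ ⋃ y : Fin d → ℤ,
          {ω : PercConfig d | y ∈ latticeBox d w m ∧ x ≠ y ∧ ω s(x, y) = true} := by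
      rintro ω ⟨y, hy1, hy2⟩
      exact Set.mem_iUnion.mpr ⟨y, hy1, hy2⟩
    have hterm : ∀ y : Fin d → ℤ,
        P {ω : PercConfig d | y ∈ latticeBox d w m ∧ x ≠ y ∧ ω s(x, y) = true}
          ≤ (if y ∈ B then ENNReal.ofReal (β * c0) else 0) := by
      intro y
      by_cases hyB : y ∈ B
      · rw [if_pos hyB]
        obtain ⟨hxy, hedge⟩ := hkey y ((hmemB y).mp hyB)
        have hss : {ω : PercConfig d | y ∈ latticeBox d w m ∧ x ≠ y ∧ ω s(x, y) = true}
            ⊆ {ω : PercConfig d | ω s(x, y) = true} := fun ω h => h.2.2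
        refine (measure_mono hss).trans ?_
        rw [hopen x y hxy]
        exact ofReal_pConn_le hβ (by positivity) hedge
      · rw [if_neg hyB]
        have : {ω : PercConfig d | y ∈ latticeBox d w m ∧ x ≠ y ∧ ω s(x, y) = true} = ∅ := by
          ext ω
          simp only [Set.mem_setOf_eq, Set.mem_empty_iff_false, iff_false]
          rintro ⟨hy1, -⟩
          exact hyB ((hmemB y).mpr hy1)
        rw [this]
        simp
    have hcard : B.card = m ^ d := by
      rw [hB, Fintype.card_piFinset]
      have : ∀ i : Fin d, (Finset.Ico ((m : ℤ) * w i) ((m : ℤ) * w i + m)).card = m := by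
        intro i
        rw [Int.card_Ico]
        simp
      rw [Finset.prod_congr rfl (fun i _ => this i), Finset.prod_const]
      simp
    calc P {ω : PercConfig d | ∃ y ∈ latticeBox d w m, x ≠ y ∧ ω s(x, y) = true}
        ≤ ∑' y : Fin d → ℤ,
            P {ω : PercConfig d | y ∈ latticeBox d w m ∧ x ≠ y ∧ ω s(x, y) = true} :=
          (measure_mono hsub).trans (measure_iUnion_le _)
      _ ≤ ∑' y : Fin d → ℤ, (if y ∈ B then ENNReal.ofReal (β * c0) else 0) :=
          ENNReal.tsum_le_tsum hterm
      _ = ∑ y ∈ B, ENNReal.ofReal (β * c0) := by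
          rw [tsum_eq_sum (s := B) (fun b hb => if_neg hb)]
          exact Finset.sum_congr rfl fun y hy => if_pos hy
      _ = (B.card : ℝ≥0∞) * ENNReal.ofReal (β * c0) := by
          rw [Finset.sum_const, nsmul_eq_mul]
      _ = ENNReal.ofReal (((m ^ d : ℕ) : ℝ) * (β * c0)) := by
          rw [hcard, ← ENNReal.ofReal_natCast (m ^ d), ← ENNReal.ofReal_mul (by positivity)]
      _ ≤ ENNReal.ofReal (β * 4 ^ (2 * d) / ((s : ℝ) ^ (2 * d) * (m : ℝ) ^ d)) := by
          apply ENNReal.ofReal_le_ofReal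
          have hcast : ((m * (s - 1) : ℕ) : ℝ) = (m : ℝ) * ((s : ℝ) - 1) := by
            push_cast [Nat.cast_sub (by omega : 1 ≤ s)]; ring
          have hb1 : (0 : ℝ) < (s : ℝ) - 1 := by linarith
          have hbase : (m : ℝ) * (((m : ℝ) * ((s : ℝ) - 1)) ^ 2)⁻¹
              ≤ 16 / ((s : ℝ) ^ 2 * (m : ℝ)) := by
            rw [← div_eq_mul_inv, div_le_div_iff₀ (by positivity) (by positivity)]
            nlinarith
          calc ((m ^ d : ℕ) : ℝ) * (β * c0)
              = β * ((m : ℝ) * (((m : ℝ) * ((s : ℝ) - 1)) ^ 2)⁻¹) ^ d := by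
                rw [hc0, hcast, pow_mul, ← inv_pow]
                push_cast
                rw [mul_pow]
                ring
            _ ≤ β * (16 / ((s : ℝ) ^ 2 * (m : ℝ))) ^ d :=
                mul_le_mul_of_nonneg_left (pow_le_pow_left₀ (by positivity) hbase d) hβ
            _ = β * 4 ^ (2 * d) / ((s : ℝ) ^ (2 * d) * (m : ℝ) ^ d) := by
                have h16 : (16 : ℝ) ^ d = 4 ^ (2 * d) := by
                  rw [pow_mul]; norm_num
                have hs2 : (((s : ℝ)) ^ 2) ^ d = (s : ℝ) ^ (2 * d) := by
                  rw [← pow_mul]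
                rw [div_pow, mul_pow, h16, hs2, mul_div_assoc]
end
end

section
/- There exists a constant C_d < ∞, depending only on the dimension d, such that for all β ≥ 0, all integers m ≥ 2, and all u, v, w ∈ ℤ^d with ‖u−v‖_∞ = 1 and ‖v−w‖_∞ ≥ 2: ℙ_β( ∃ x, y ∈ V_v^m with ‖x−y‖_∞ ≤ 1, x ∼ V_u^m, and y ∼ V_w^m ) is at most C_d·β·⌈β⌉·log(m) / ( ‖v−w‖_∞^{2d}·m ) when d = 1, and at most C_d·β·⌈β⌉ / ( ‖v−w‖_∞^{2d}·m ) when d ≥ 2. -/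
open MeasureTheory ProbabilityTheory ENNReal

noncomputable section

private lemma key_ineq (d : ℕ) (hd : 1 ≤ d) (a : ℝ) (ha : 1 ≤ a) :
    (((a+1)) ^ (d+1))⁻¹ ≤ (1/(d:ℝ)) * ((a ^ d)⁻¹ - ((a+1) ^ d)⁻¹) := by
  have ha0 : (0:ℝ) < a := by linarith
  obtain ⟨e, rfl⟩ : ∃ e, d = e + 1 := ⟨d - 1, by omega⟩
  have hp : (0:ℝ) < (a+1)^(e+1) := by positivity
  have hq : (0:ℝ) < a^(e+1) := by positivity
  have hr : (0:ℝ) < a^e := by positivity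
  have hd0' : (0:ℝ) < ((e+1:ℕ):ℝ) := by exact_mod_cast Nat.succ_pos e
  have bern : 1 + ((e+1:ℕ):ℝ) * (1/a) ≤ (1 + 1/a) ^ (e+1) :=
    one_add_mul_le_pow (by have := one_div_pos.mpr ha0; linarith) (e+1)
  have hmul : (1 + 1/a) ^ (e+1) * a ^ (e+1) = (a+1)^(e+1) := by
    rw [← mul_pow]
    congr 1
    field_simp
  have h1 : a^(e+1) + ((e+1:ℕ):ℝ) * a^e ≤ (a+1)^(e+1) := by
    have h := mul_le_mul_of_nonneg_right bern (le_of_lt hq)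
    rw [hmul] at h
    have hae : (1/a) * a^(e+1) = a^e := by
      rw [pow_succ]; field_simp
    nlinarith [h]
  have heq : (1/((e+1:ℕ):ℝ)) * ((a ^ (e+1))⁻¹ - ((a+1) ^ (e+1))⁻¹)
      = ((a+1)^(e+1) - a^(e+1)) / (((e+1:ℕ):ℝ) * a^(e+1) * (a+1)^(e+1)) := by
    have h1' := hq.ne'
    have h2' := hp.ne'
    have h3' := hd0'.ne'
    field_simp
  rw [heq, pow_succ ((a+1)) (e+1), ← one_div]
  rw [div_le_div_iff₀ (by positivity) (by positivity)]
  have hpow : a^e * a = a^(e+1) := (pow_succ a e).symm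
  have h2 : (((e+1:ℕ):ℝ) * a^e) * ((a+1)^(e+1) * (a+1))
      ≤ ((a+1)^(e+1) - a^(e+1)) * ((a+1)^(e+1) * (a+1)) :=
    mul_le_mul_of_nonneg_right (by linarith) (by positivity)
  have step1 : ((e+1:ℕ):ℝ) * a^(e+1) * (a+1)^(e+1) ≤ (((e+1:ℕ):ℝ)*a^e) * ((a+1)^(e+1)*(a+1)) := by
    have haa : a ≤ a + 1 := by linarith
    calc ((e+1:ℕ):ℝ) * a^(e+1) * (a+1)^(e+1) = (((e+1:ℕ):ℝ)*a^e) * ((a+1)^(e+1) * a) := by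
          rw [← hpow]; ring
      _ ≤ (((e+1:ℕ):ℝ)*a^e)*((a+1)^(e+1)*(a+1)) := by
          apply mul_le_mul_of_nonneg_left _ (by positivity)
          exact mul_le_mul_of_nonneg_left haa (le_of_lt hp)
  linarith
private lemma tail_aux (d : ℕ) (hd : 1 ≤ d) (s : ℕ) (hs : 1 ≤ s) : ∀ M : ℕ,
    ∑ k ∈ Finset.Icc (s+1) M, ((k:ℝ) ^ (d+1))⁻¹
      ≤ (1/(d:ℝ)) * (((s:ℝ) ^ d)⁻¹ - (((max M s : ℕ):ℝ) ^ d)⁻¹) := by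
  intro M
  induction M with
  | zero =>
      rw [Finset.Icc_eq_empty_of_lt (by omega : (0:ℕ) < s+1)]
      rw [max_eq_right (Nat.zero_le s)]
      simp
  | succ M ih =>
      rcases le_or_gt (M+1) s with h | h
      · rw [Finset.Icc_eq_empty_of_lt (by omega : M+1 < s+1)]
        rw [max_eq_right (by omega : M+1 ≤ s)]
        simp
      · have hMs : s ≤ M := by omega
        rw [Finset.sum_Icc_succ_top (by omega : s+1 ≤ M+1)]
        rw [max_eq_left hMs] at ih
        rw [max_eq_left (by omega : s ≤ M+1)]
        have hM1 : (1:ℝ) ≤ (M:ℝ) := by exact_mod_cast le_trans hs hMs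
        have hkey := key_ineq d hd (M:ℝ) hM1
        have hcast : ((M:ℝ)+1) = ((M+1:ℕ):ℝ) := by push_cast; ring
        rw [hcast] at hkey
        linarith

theorem sum_inv_pow_tail (d : ℕ) (hd : 1 ≤ d) (s M : ℕ) (hs : 1 ≤ s) :
    ∑ k ∈ Finset.Icc s M, ((k:ℝ) ^ (d+1))⁻¹ ≤ 2 * ((s:ℝ) ^ d)⁻¹ := by
  have hs0 : (1:ℝ) ≤ (s:ℝ) := by exact_mod_cast hs
  have hsd : (0:ℝ) < (s:ℝ)^d := by positivity
  have hd0 : (1:ℝ) ≤ (d:ℝ) := by exact_mod_cast hd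
  have tail := tail_aux d hd s hs M
  have tail2 : ∑ k ∈ Finset.Icc (s+1) M, ((k:ℝ) ^ (d+1))⁻¹ ≤ ((s:ℝ)^d)⁻¹ := by
    have h1 : (0:ℝ) ≤ ((((max M s : ℕ)):ℝ) ^ d)⁻¹ := by positivity
    have h2 : (1/(d:ℝ)) * (((s:ℝ) ^ d)⁻¹ - (((max M s : ℕ):ℝ) ^ d)⁻¹) ≤ ((s:ℝ)^d)⁻¹ := by
      rw [div_mul_eq_mul_div, one_mul, div_le_iff₀ (by linarith)]
      have h3 : (0:ℝ) ≤ ((s:ℝ)^d)⁻¹ := by positivity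
      nlinarith
    linarith
  rcases le_or_gt s M with h | h
  · have hsplit : Finset.Icc s M = insert s (Finset.Icc (s+1) M) := by
      ext k; simp only [Finset.mem_Icc, Finset.mem_insert]; omega
    rw [hsplit, Finset.sum_insert (by simp only [Finset.mem_Icc]; omega)]
    have h1 : ((s:ℝ) ^ (d+1))⁻¹ ≤ ((s:ℝ)^d)⁻¹ := by
      apply inv_anti₀ hsd
      calc (s:ℝ)^d = (s:ℝ)^d * 1 := by ring
      _ ≤ (s:ℝ)^d * (s:ℝ) := by nlinarith
      _ = (s:ℝ)^(d+1) := by rw [pow_succ]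
    linarith
  · rw [Finset.Icc_eq_empty_of_lt h]
    simp only [Finset.sum_empty]
    positivity

theorem sum_harmonic_le (m : ℕ) (hm : 1 ≤ m) :
    ∑ t ∈ Finset.Icc 1 m, ((t:ℝ))⁻¹ ≤ 1 + Real.log m := by
  induction m with
  | zero => omega
  | succ m ih =>
      rcases Nat.eq_or_lt_of_le hm with h | h
      · simp [← h]
      · have hm1 : 1 ≤ m := by omega
        have hm0 : (0:ℝ) < m := by exact_mod_cast hm1
        rw [Finset.sum_Icc_succ_top (by omega : 1 ≤ m+1)]
        have hlog : Real.log m + ((m:ℝ)+1)⁻¹ ≤ Real.log ((m:ℝ)+1) := by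
          have hx : (0:ℝ) < (m:ℝ)/((m:ℝ)+1) := by positivity
          have h2 := Real.log_le_sub_one_of_pos hx
          rw [Real.log_div (ne_of_gt hm0) (by positivity)] at h2
          have hh : (m:ℝ)/((m:ℝ)+1) - 1 = -((m:ℝ)+1)⁻¹ := by field_simp; ring
          rw [hh] at h2
          linarith
        have hc : ((m+1:ℕ):ℝ) = (m:ℝ)+1 := by push_cast; ring
        rw [hc]
        have := ih hm1
        linarith

namespace S8

lemma le_supNorm {d : ℕ} (x : Fin d → ℤ) (i : Fin d) : (x i).natAbs ≤ supNorm x :=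
  Finset.le_sup (f := fun i => (x i).natAbs) (Finset.mem_univ i)

lemma exists_supNorm {d : ℕ} (hd : 1 ≤ d) (x : Fin d → ℤ) :
    ∃ j, (x j).natAbs = supNorm x := by
  obtain ⟨j, _, hj⟩ := Finset.exists_mem_eq_sup Finset.univ
    (Finset.univ_nonempty_iff.mpr (by have : NeZero d := ⟨by omega⟩; infer_instance))
    (fun i => (x i).natAbs)
  exact ⟨j, hj.symm⟩

/-- The box as a `Finset`. -/
def boxF (d : ℕ) (v : Fin d → ℤ) (m : ℕ) : Finset (Fin d → ℤ) :=
  Finset.Icc (fun i => (m:ℤ) * v i) (fun i => (m:ℤ) * v i + (m:ℤ) - 1)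

lemma mem_boxF {d : ℕ} {v x : Fin d → ℤ} {m : ℕ} :
    x ∈ boxF d v m ↔ x ∈ latticeBox d v m := by
  simp only [boxF, Finset.mem_Icc, latticeBox, Set.mem_setOf_eq, Pi.le_def]
  constructor
  · rintro ⟨h1, h2⟩ i; exact ⟨h1 i, by have := h2 i; omega⟩
  · rintro h; exact ⟨fun i => (h i).1, fun i => by have := (h i).2; omega⟩

lemma card_boxF {d : ℕ} (v : Fin d → ℤ) {m : ℕ} (hm : 1 ≤ m) :
    (boxF d v m).card = m ^ d := by
  rw [boxF, Pi.card_Icc]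
  have : ∀ i : Fin d, (Finset.Icc ((m:ℤ) * v i) ((m:ℤ) * v i + (m:ℤ) - 1)).card = m := by
    intro i
    rw [Int.card_Icc]
    omega
  simp [this]

lemma sqrt_ge {d : ℕ} (hd : 1 ≤ d) {u v : Fin d → ℤ} {r : ℝ} (hr : 0 < r)
    (h : r + 1 ≤ (supNorm (u - v) : ℝ)) {x y : Fin d → ℝ}
    (hx : x ∈ unitCube u) (hy : y ∈ unitCube v) :
    r ≤ Real.sqrt (∑ i, (x i - y i) ^ 2) := by
  obtain ⟨j, hj⟩ := exists_supNorm hd (u - v)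
  have hxj := hx j (Set.mem_univ j)
  have hyj := hy j (Set.mem_univ j)
  simp only [Set.mem_Ico] at hxj hyj
  have habs : r ≤ |x j - y j| := by
    have hK : r + 1 ≤ ((u j - v j).natAbs : ℝ) := by
      rw [show (u - v) j = u j - v j from rfl] at hj
      rw [hj]; exact h
    rcases le_or_gt (v j) (u j) with hc | hc
    · have hZ : ((u j - v j).natAbs : ℤ) = u j - v j := Int.natAbs_of_nonneg (by omega)
      have hR : ((u j - v j).natAbs : ℝ) = ((u j : ℝ) - v j) := by
        have := congrArg (fun z : ℤ => (z : ℝ)) hZ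
        simp only [Int.cast_natCast, Int.cast_sub] at this
        exact this
      rw [hR] at hK
      have hxy1 : (u j : ℝ) ≤ x j := hxj.1
      have hxy2 : y j < (v j : ℝ) + 1 := hyj.2
      have hposR : (0:ℝ) ≤ x j - y j := by linarith
      rw [abs_of_nonneg hposR]
      linarith
    · have hZ : ((u j - v j).natAbs : ℤ) = v j - u j := by omega
      have hR : ((u j - v j).natAbs : ℝ) = ((v j : ℝ) - u j) := by
        have := congrArg (fun z : ℤ => (z : ℝ)) hZ
        simp only [Int.cast_natCast, Int.cast_sub] at this
        exact this
      rw [hR] at hK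
      rw [abs_of_nonpos (by linarith [hyj.1, hxj.2] : x j - y j ≤ 0)]
      linarith [hyj.1, hxj.2]
  calc r ≤ |x j - y j| := habs
    _ = Real.sqrt ((x j - y j)^2) := (Real.sqrt_sq_eq_abs _).symm
    _ ≤ Real.sqrt (∑ i, (x i - y i) ^ 2) := by
        apply Real.sqrt_le_sqrt
        exact Finset.single_le_sum (f := fun i => (x i - y i)^2)
          (fun i _ => sq_nonneg _) (Finset.mem_univ j)

lemma measurableSet_unitCube {d : ℕ} (u : Fin d → ℤ) : MeasurableSet (unitCube u) :=
  MeasurableSet.univ_pi fun _ => measurableSet_Ico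

lemma volume_unitCube {d : ℕ} (u : Fin d → ℤ) : volume (unitCube u) = 1 := by
  rw [unitCube, volume_pi_pi]
  simp [Real.volume_Ico]

lemma edgeIntegral_le {d : ℕ} (hd : 1 ≤ d) {u v : Fin d → ℤ} {r : ℝ} (hr : 0 < r)
    (h : r + 1 ≤ (supNorm (u - v) : ℝ)) :
    edgeIntegral d u v ≤ ENNReal.ofReal ((r ^ (2*d))⁻¹) := by
  have hbound : ∀ x ∈ unitCube u, ∀ y ∈ unitCube v,
      ENNReal.ofReal ((Real.sqrt (∑ i, (x i - y i) ^ 2)) ^ (-(2 * (d : ℝ))))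
        ≤ ENNReal.ofReal ((r ^ (2*d))⁻¹) := by
    intro x hx y hy
    apply ENNReal.ofReal_le_ofReal
    set S := Real.sqrt (∑ i, (x i - y i) ^ 2) with hS
    have hrS : r ≤ S := sqrt_ge hd hr h hx hy
    have hS0 : 0 ≤ S := Real.sqrt_nonneg _
    have : S ^ (-(2 * (d:ℝ))) = (S ^ (2*d))⁻¹ := by
      rw [Real.rpow_neg hS0]
      congr 1
      rw [show (2 * (d:ℝ)) = ((2*d : ℕ) : ℝ) by push_cast; ring, Real.rpow_natCast]
    rw [this]
    apply inv_anti₀ (by positivity)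
    exact pow_le_pow_left₀ (le_of_lt hr) hrS _
  rw [edgeIntegral]
  calc ∫⁻ x in unitCube u, ∫⁻ y in unitCube v,
        ENNReal.ofReal ((Real.sqrt (∑ i, (x i - y i) ^ 2)) ^ (-(2 * (d : ℝ))))
      ≤ ∫⁻ _ in unitCube u, ENNReal.ofReal ((r ^ (2*d))⁻¹) := by
        apply setLIntegral_mono' (measurableSet_unitCube u)
        intro x hx
        calc ∫⁻ y in unitCube v,
            ENNReal.ofReal ((Real.sqrt (∑ i, (x i - y i) ^ 2)) ^ (-(2 * (d : ℝ))))
            ≤ ∫⁻ _ in unitCube v, ENNReal.ofReal ((r ^ (2*d))⁻¹) :=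
              setLIntegral_mono' (measurableSet_unitCube v) (hbound x hx)
          _ = ENNReal.ofReal ((r ^ (2*d))⁻¹) := by
              rw [setLIntegral_const, volume_unitCube, mul_one]
    _ = ENNReal.ofReal ((r ^ (2*d))⁻¹) := by
        rw [setLIntegral_const, volume_unitCube, mul_one]

lemma pConn_le_one {d : ℕ} (β : ℝ) (u v : Fin d → ℤ) : pConn d β u v ≤ 1 := by
  rw [pConn]
  split
  · exact le_refl 1
  · linarith [Real.exp_nonneg (-β * (edgeIntegral d u v).toReal)]

lemma pConn_nonneg {d : ℕ} {β : ℝ} (hβ : 0 ≤ β) (u v : Fin d → ℤ) :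
    0 ≤ pConn d β u v := by
  rw [pConn]
  split
  · norm_num
  · have : -β * (edgeIntegral d u v).toReal ≤ 0 := by
      have := ENNReal.toReal_nonneg (a := edgeIntegral d u v)
      nlinarith
    linarith [Real.exp_le_one_iff.mpr this]

lemma pConn_le_far {d : ℕ} (hd : 1 ≤ d) {β : ℝ} (hβ : 0 ≤ β) {u v : Fin d → ℤ}
    {r : ℝ} (hr : 0 < r) (h : r + 1 ≤ (supNorm (u - v) : ℝ)) :
    pConn d β u v ≤ β * (r ^ (2*d))⁻¹ := by
  have hle := edgeIntegral_le hd hr h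
  have hne : edgeIntegral d u v ≠ ⊤ :=
    ne_top_of_le_ne_top (by exact ENNReal.ofReal_ne_top) hle
  rw [pConn, if_neg hne]
  have ht : (edgeIntegral d u v).toReal ≤ (r ^ (2*d))⁻¹ :=
    ENNReal.toReal_le_of_le_ofReal (by positivity) hle
  have ht0 : 0 ≤ (edgeIntegral d u v).toReal := ENNReal.toReal_nonneg
  have hexp := Real.add_one_le_exp (-β * (edgeIntegral d u v).toReal)
  nlinarith

lemma measurable_eval {d : ℕ} (e : Sym2 (Fin d → ℤ)) :
    Measurable (fun ω : PercConfig d => ω e) := measurable_pi_apply e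

lemma open_set_eq {d : ℕ} (e : Sym2 (Fin d → ℤ)) :
    {ω : PercConfig d | ω e = true} = (fun ω : PercConfig d => ω e) ⁻¹' {true} := by
  ext ω; simp

lemma measure_pair_le {d : ℕ} {β : ℝ} {P : Measure (PercConfig d)} (hP : IsLRP d β P)
    {x a y b : Fin d → ℤ} (hxa : x ≠ a) (hyb : y ≠ b) (he : s(x,a) ≠ s(y,b)) :
    P ({ω | ω s(x,a) = true} ∩ {ω | ω s(y,b) = true})
      = ENNReal.ofReal (pConn d β x a) * ENNReal.ofReal (pConn d β y b) := by
  have hind : ProbabilityTheory.IndepFun (fun ω : PercConfig d => ω s(x,a))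
      (fun ω : PercConfig d => ω s(y,b)) P := hP.indep.indepFun he
  have := hind.measure_inter_preimage_eq_mul {true} {true}
    (measurableSet_singleton true) (measurableSet_singleton true)
  rw [open_set_eq, open_set_eq (s(y,b))]
  rw [this, ← open_set_eq, ← open_set_eq, hP.openProb x a hxa, hP.openProb y b hyb]

lemma supNorm_comm {d : ℕ} (u v : Fin d → ℤ) : supNorm (u - v) = supNorm (v - u) := by
  unfold supNorm
  congr 1
  funext i
  simp [Pi.sub_apply]
  omega

lemma boxF_disjoint {d : ℕ} {v w : Fin d → ℤ} {m : ℕ} (hm : 1 ≤ m) (hvw : v ≠ w)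
    {x : Fin d → ℤ} (hx : x ∈ boxF d v m) (hx' : x ∈ boxF d w m) : False := by
  obtain ⟨i, hi⟩ : ∃ i, v i ≠ w i := by
    by_contra hc
    push_neg at hc
    exact hvw (funext hc)
  simp only [boxF, Finset.mem_Icc, Pi.le_def] at hx hx'
  have h1 := hx.1 i; have h2 := hx.2 i; have h3 := hx'.1 i; have h4 := hx'.2 i
  have hm' : (1:ℤ) ≤ (m:ℤ) := by exact_mod_cast hm
  rcases lt_or_gt_of_ne hi with hlt | hlt
  · have : (m:ℤ) * (v i + 1) ≤ (m:ℤ) * w i :=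
      mul_le_mul_of_nonneg_left (by omega) (by omega)
    nlinarith
  · have : (m:ℤ) * (w i + 1) ≤ (m:ℤ) * v i :=
      mul_le_mul_of_nonneg_left (by omega) (by omega)
    nlinarith

lemma edge_ne {d : ℕ} {u v w : Fin d → ℤ} {m : ℕ} (hm : 1 ≤ m)
    (huv : v ≠ u) (hvw : v ≠ w) (huw : u ≠ w)
    {x y a b : Fin d → ℤ} (hx : x ∈ boxF d v m) (hy : y ∈ boxF d v m)
    (ha : a ∈ boxF d u m) (hb : b ∈ boxF d w m) : s(x,a) ≠ s(y,b) := by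
  intro h
  rw [Sym2.eq_iff] at h
  rcases h with ⟨_, rfl⟩ | ⟨rfl, rfl⟩
  · exact boxF_disjoint hm huw ha hb
  · exact boxF_disjoint hm hvw hx hb

lemma supNorm_le_iff {d : ℕ} {z : Fin d → ℤ} {n : ℕ} :
    supNorm z ≤ n ↔ ∀ i, (z i).natAbs ≤ n := by
  unfold supNorm
  rw [Finset.sup_le_iff]
  simp

/-- lower bound on distances between the boxes of `v` and `w`. -/
lemma dist_boxes_lower {d : ℕ} (hd : 1 ≤ d) {v w : Fin d → ℤ} {m K : ℕ}
    (hK : supNorm (v - w) = K)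
    {y b : Fin d → ℤ} (hy : y ∈ boxF d v m) (hb : b ∈ boxF d w m) :
    (m:ℤ) * K - m + 1 ≤ ((supNorm (y - b) : ℤ)) := by
  obtain ⟨j, hj⟩ := exists_supNorm hd (v - w)
  rw [hK] at hj
  simp only [boxF, Finset.mem_Icc, Pi.le_def] at hy hb
  have h1 := hy.1 j; have h2 := hy.2 j; have h3 := hb.1 j; have h4 := hb.2 j
  have hsup : ((y j - b j).natAbs : ℤ) ≤ (supNorm (y - b) : ℤ) := by
    exact_mod_cast le_supNorm (y - b) j
  have hjj : (v j - w j).natAbs = K := hj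
  rcases le_or_gt (w j) (v j) with hc | hc
  · have hvw : v j - w j = (K:ℤ) := by omega
    have : (m:ℤ) * v j = (m:ℤ) * w j + (m:ℤ) * K := by
      have : (m:ℤ) * (w j + (K:ℤ)) = (m:ℤ) * w j + (m:ℤ) * K := by ring
      rw [← this]; congr 1; omega
    have hyb : (m:ℤ) * K - m + 1 ≤ y j - b j := by omega
    have : y j - b j ≤ ((y j - b j).natAbs : ℤ) := Int.le_natAbs
    omega
  · have hvw : w j - v j = (K:ℤ) := by omega
    have : (m:ℤ) * w j = (m:ℤ) * v j + (m:ℤ) * K := by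
      have : (m:ℤ) * (v j + (K:ℤ)) = (m:ℤ) * v j + (m:ℤ) * K := by ring
      rw [← this]; congr 1; omega
    have hyb : (m:ℤ) * K - m + 1 ≤ b j - y j := by omega
    have h5 : b j - y j ≤ ((b j - y j).natAbs : ℤ) := Int.le_natAbs
    have h6 : (y j - b j).natAbs = (b j - y j).natAbs := by omega
    omega

/-- upper bound on distances between boxes of adjacent `u`, `v`. -/
lemma dist_boxes_upper {d : ℕ} {u v : Fin d → ℤ} {m : ℕ} (hm : 1 ≤ m)
    (huv : supNorm (u - v) = 1)
    {x a : Fin d → ℤ} (hx : x ∈ boxF d v m) (ha : a ∈ boxF d u m) :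
    supNorm (x - a) ≤ 2 * m := by
  rw [supNorm_le_iff]
  intro i
  simp only [boxF, Finset.mem_Icc, Pi.le_def] at hx ha
  have h1 := hx.1 i; have h2 := hx.2 i; have h3 := ha.1 i; have h4 := ha.2 i
  have hne : (u i - v i).natAbs ≤ 1 := huv ▸ le_supNorm (u - v) i
  have hm' : (1:ℤ) ≤ (m:ℤ) := by exact_mod_cast hm
  have hd1 : -(1:ℤ) ≤ u i - v i := by omega
  have hd2 : u i - v i ≤ 1 := by omega
  have key : (m:ℤ) * u i - (m:ℤ) * v i ≤ m ∧ -(m:ℤ) ≤ (m:ℤ) * u i - (m:ℤ) * v i := by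
    constructor
    · have : (m:ℤ) * (u i - v i) ≤ (m:ℤ) * 1 := mul_le_mul_of_nonneg_left hd2 (by omega)
      nlinarith
    · have : (m:ℤ) * (-1) ≤ (m:ℤ) * (u i - v i) := mul_le_mul_of_nonneg_left hd1 (by omega)
      nlinarith
  have : ((x - a) i) = x i - a i := rfl
  rw [this]
  omega

/-- weight function -/
def Hw (d : ℕ) (k : ℕ) : ℝ := (((max (k-1) 1 : ℕ) : ℝ) ^ (2*d))⁻¹

lemma Hw_nonneg (d k : ℕ) : 0 ≤ Hw d k := by unfold Hw; positivity

lemma Hw_le {d : ℕ} (k : ℕ) (hk : 1 ≤ k) :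
    Hw d k ≤ 2^(2*d) * (((k:ℝ))^(2*d))⁻¹ := by
  unfold Hw
  rcases le_or_gt k 1 with h | h
  · have : k = 1 := by omega
    subst this
    norm_num
    calc (1:ℝ) = 1^(2*d) := (one_pow _).symm
      _ ≤ 2^(2*d) := pow_le_pow_left₀ (by norm_num) (by norm_num) _
  · have hmax : max (k-1) 1 = k - 1 := by omega
    rw [hmax]
    have hc : ((k - 1 : ℕ) : ℝ) = (k:ℝ) - 1 := by
      have : (1:ℕ) ≤ k := by omega
      push_cast [Nat.cast_sub this]
      ring
    rw [hc]
    have hk2 : (2:ℝ) ≤ (k:ℝ) := by exact_mod_cast h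
    have h2 : (k:ℝ)/2 ≤ (k:ℝ) - 1 := by linarith
    have hpos : (0:ℝ) < ((k:ℝ)/2)^(2*d) := by positivity
    have hmono : ((k:ℝ)/2)^(2*d) ≤ ((k:ℝ)-1)^(2*d) :=
      pow_le_pow_left₀ (by linarith) h2 _
    calc (((k:ℝ)-1)^(2*d))⁻¹ ≤ (((k:ℝ)/2)^(2*d))⁻¹ := by
          apply inv_anti₀ hpos hmono
      _ = 2^(2*d) * (((k:ℝ))^(2*d))⁻¹ := by
          rw [div_pow]
          field_simp
  
lemma pConn_le_Hw {d : ℕ} (hd : 1 ≤ d) {β : ℝ} (hβ : 0 < β) (x a : Fin d → ℤ) :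
    pConn d β x a ≤ (⌈β⌉ : ℝ) * Hw d (supNorm (x - a)) := by
  have hceil1 : (1:ℝ) ≤ (⌈β⌉ : ℝ) := by
    have := Int.ceil_pos.mpr hβ
    exact_mod_cast this
  have hceilβ : β ≤ (⌈β⌉ : ℝ) := Int.le_ceil β
  set k := supNorm (x - a) with hk
  rcases le_or_gt k 1 with h | h
  · have : Hw d k = 1 := by
      unfold Hw
      have : max (k-1) 1 = 1 := by omega
      rw [this]; norm_num
    rw [this, mul_one]
    exact le_trans (pConn_le_one β x a) hceil1
  · have hmax : max (k-1) 1 = k - 1 := by omega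
    have hr0 : (0:ℝ) < ((k-1:ℕ):ℝ) := by
      have : 1 ≤ k - 1 := by omega
      exact_mod_cast Nat.lt_of_lt_of_le Nat.zero_lt_one this
    have hr1 : ((k-1:ℕ):ℝ) + 1 ≤ ((supNorm (x - a)):ℝ) := by
      rw [← hk]
      have : ((k-1:ℕ):ℝ) = (k:ℝ) - 1 := by
        have h1 : (1:ℕ) ≤ k := by omega
        push_cast [Nat.cast_sub h1]; ring
      rw [this]; linarith
    have := pConn_le_far hd (le_of_lt hβ) hr0 hr1
    calc pConn d β x a ≤ β * (((k-1:ℕ):ℝ) ^ (2*d))⁻¹ := this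
      _ ≤ (⌈β⌉:ℝ) * (((k-1:ℕ):ℝ) ^ (2*d))⁻¹ := by
          apply mul_le_mul_of_nonneg_right hceilβ
          positivity
      _ = (⌈β⌉:ℝ) * Hw d k := by
          unfold Hw; rw [hmax]

/-- sphere of radius `k` around `x` -/
def sphereF (d : ℕ) (x : Fin d → ℤ) (k : ℕ) : Finset (Fin d → ℤ) :=
  Finset.Icc (fun i => x i - (k:ℤ)) (fun i => x i + (k:ℤ)) \
  Finset.Icc (fun i => x i - ((k:ℤ)-1)) (fun i => x i + ((k:ℤ)-1))

lemma mem_sphereF {d : ℕ} {x a : Fin d → ℤ} {k : ℕ} (hk : 1 ≤ k)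
    (h : supNorm (x - a) = k) : a ∈ sphereF d x k := by
  rw [sphereF, Finset.mem_sdiff]
  constructor
  · rw [Finset.mem_Icc]
    constructor
    · intro i
      have h5 := le_supNorm (x - a) i
      rw [h] at h5
      have hxa : (x - a) i = x i - a i := rfl
      rw [hxa] at h5
      show x i - (k:ℤ) ≤ a i
      omega
    · intro i
      have h5 := le_supNorm (x - a) i
      rw [h] at h5
      have hxa : (x - a) i = x i - a i := rfl
      rw [hxa] at h5
      show a i ≤ x i + (k:ℤ)
      omega
  · intro hmem
    rw [Finset.mem_Icc] at hmem
    have : supNorm (x - a) ≤ k - 1 := by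
      rw [supNorm_le_iff]
      intro i
      have h1 : x i - ((k:ℤ)-1) ≤ a i := hmem.1 i
      have h2 : a i ≤ x i + ((k:ℤ)-1) := hmem.2 i
      have hxa : (x - a) i = x i - a i := rfl
      rw [hxa]
      omega
    omega

lemma card_sphereF {d : ℕ} (x : Fin d → ℤ) {k : ℕ} (hk : 1 ≤ k) :
    (sphereF d x k).card = (2*k+1)^d - (2*k-1)^d := by
  rw [sphereF, Finset.card_sdiff_of_subset]
  · rw [Pi.card_Icc, Pi.card_Icc]
    have h1 : ∀ i : Fin d, (Finset.Icc (x i - (k:ℤ)) (x i + (k:ℤ))).card = 2*k+1 := by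
      intro i; rw [Int.card_Icc]; omega
    have h2 : ∀ i : Fin d, (Finset.Icc (x i - ((k:ℤ)-1)) (x i + ((k:ℤ)-1))).card = 2*k-1 := by
      intro i; rw [Int.card_Icc]; omega
    simp [h1, h2]
  · rw [Finset.Icc_subset_Icc_iff]
    · constructor <;> (rw [Pi.le_def]; intro i; omega)
    · rw [Pi.le_def]; intro i; omega

lemma pow_sub_pow_le_real (n : ℕ) {a b : ℝ} (hb0 : 0 ≤ b) (hba : b ≤ a) :
    a^(n+1) - b^(n+1) ≤ (n+1) * (a - b) * a^n := by
  induction n with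
  | zero => simp
  | succ n ih =>
      have ha0 : 0 ≤ a := le_trans hb0 hba
      have hb' : b^(n+1) ≤ a^(n+1) := pow_le_pow_left₀ hb0 hba _
      have h1 : a*(a^(n+1) - b^(n+1)) ≤ a*((n+1)*(a-b)*a^n) :=
        mul_le_mul_of_nonneg_left ih ha0
      have h2 : (a-b)*b^(n+1) ≤ (a-b)*a^(n+1) :=
        mul_le_mul_of_nonneg_left hb' (by linarith)
      have h4 : a * (((n:ℝ)+1)*(a-b)*a^n) = ((n:ℝ)+1)*(a-b)*a^(n+1) := by ring
      have h5 : a^(n+1+1) - b^(n+1+1) = a*(a^(n+1) - b^(n+1)) + (a-b)*b^(n+1) := by ring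
      have h6 : ((n:ℝ)+1+1)*(a-b)*a^(n+1) = ((n:ℝ)+1)*(a-b)*a^(n+1) + (a-b)*a^(n+1) := by
        ring
      push_cast at ih h1 ⊢
      linarith [h1, h2, h4, h5, h6]

lemma sphere_term_le {d : ℕ} (hd : 1 ≤ d) {k : ℕ} (hk : 1 ≤ k) :
    (((2*k+1)^d - (2*k-1)^d : ℕ) : ℝ) * Hw d k
      ≤ (2*(d:ℝ)*3^(d-1)*2^(2*d)) * (((k:ℝ))^(d+1))⁻¹ := by
  obtain ⟨e, rfl⟩ : ∃ e, d = e + 1 := ⟨d - 1, by omega⟩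
  have hkR : (1:ℝ) ≤ (k:ℝ) := by exact_mod_cast hk
  have hk0 : (k:ℝ) ≠ 0 := by positivity
  have hle : (2*k-1)^(e+1) ≤ (2*k+1)^(e+1) := Nat.pow_le_pow_left (by omega) _
  have hcast : (((2*k+1)^(e+1) - (2*k-1)^(e+1) : ℕ) : ℝ)
      = ((2*k+1:ℕ):ℝ)^(e+1) - ((2*k-1:ℕ):ℝ)^(e+1) := by
    rw [Nat.cast_sub hle, Nat.cast_pow, Nat.cast_pow]
  have haR : ((2*k+1:ℕ):ℝ) = 2*(k:ℝ)+1 := by push_cast; ring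
  have hbR : ((2*k-1:ℕ):ℝ) = 2*(k:ℝ)-1 := by
    have h1 : (1:ℕ) ≤ 2*k := by omega
    push_cast [Nat.cast_sub h1]; ring
  have hA : (((2*k+1)^(e+1) - (2*k-1)^(e+1) : ℕ) : ℝ)
      ≤ 2*((e:ℝ)+1)*3^e*(k:ℝ)^e := by
    rw [hcast, haR, hbR]
    have hsub := pow_sub_pow_le_real e (by linarith : (0:ℝ) ≤ 2*(k:ℝ)-1)
      (by linarith : 2*(k:ℝ)-1 ≤ 2*(k:ℝ)+1)
    have h3k : (2*(k:ℝ)+1)^e ≤ (3*(k:ℝ))^e :=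
      pow_le_pow_left₀ (by linarith) (by linarith) e
    have h3k' : (3*(k:ℝ))^e = 3^e * (k:ℝ)^e := mul_pow 3 (k:ℝ) e
    have he1 : (0:ℝ) ≤ ((e:ℝ)+1) := by positivity
    nlinarith [hsub, h3k, pow_nonneg (by linarith : (0:ℝ) ≤ 2*(k:ℝ)+1) e,
      pow_nonneg (by positivity : (0:ℝ) ≤ 3*(k:ℝ)) e]
  have hsplit : (k:ℝ)^(2*(e+1)) = (k:ℝ)^e * (k:ℝ)^(e+1+1) := by
    rw [← pow_add]; congr 1; omega
  have hHw := Hw_le (d := e+1) k hk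
  have hcardnn : (0:ℝ) ≤ (((2*k+1)^(e+1) - (2*k-1)^(e+1) : ℕ) : ℝ) := Nat.cast_nonneg _
  calc (((2*k+1)^(e+1) - (2*k-1)^(e+1) : ℕ) : ℝ) * Hw (e+1) k
      ≤ (2*((e:ℝ)+1)*3^e*(k:ℝ)^e) * (2^(2*(e+1)) * (((k:ℝ))^(2*(e+1)))⁻¹) :=
        mul_le_mul hA hHw (Hw_nonneg _ _) (by positivity)
    _ = (2*((e+1:ℕ):ℝ)*3^((e+1)-1)*2^(2*(e+1))) * (((k:ℝ))^(e+1+1))⁻¹ := by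
        rw [hsplit]
        have : (e+1)-1 = e := rfl
        rw [this]
        push_cast
        field_simp

/-- Summing the weight over any finset lying between distances `s` and `M` from `x`. -/
lemma sum_Hw_le {d : ℕ} (hd : 1 ≤ d) (x : Fin d → ℤ) (B : Finset (Fin d → ℤ))
    (s M : ℕ) (hs : 1 ≤ s)
    (hlb : ∀ a ∈ B, s ≤ supNorm (x - a)) (hub : ∀ a ∈ B, supNorm (x - a) ≤ M) :
    ∑ a ∈ B, Hw d (supNorm (x - a))
      ≤ (2*(d:ℝ)*3^(d-1)*2^(2*d)) * (2 * (((s:ℝ))^d)⁻¹) := by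
  have hmaps : ∀ a ∈ B, supNorm (x - a) ∈ Finset.Icc s M := fun a ha =>
    Finset.mem_Icc.mpr ⟨hlb a ha, hub a ha⟩
  rw [← Finset.sum_fiberwise_of_maps_to hmaps (fun a => Hw d (supNorm (x - a)))]
  have hterm : ∀ k ∈ Finset.Icc s M,
      ∑ a ∈ B.filter (fun a => supNorm (x - a) = k), Hw d (supNorm (x - a))
        ≤ (2*(d:ℝ)*3^(d-1)*2^(2*d)) * (((k:ℝ))^(d+1))⁻¹ := by
    intro k hkmem
    have hk1 : 1 ≤ k := le_trans hs (Finset.mem_Icc.mp hkmem).1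
    have heq : ∑ a ∈ B.filter (fun a => supNorm (x - a) = k), Hw d (supNorm (x - a))
        = (B.filter (fun a => supNorm (x - a) = k)).card * Hw d k := by
      rw [Finset.sum_congr rfl (fun a ha => by
        rw [(Finset.mem_filter.mp ha).2]), Finset.sum_const, nsmul_eq_mul]
    rw [heq]
    have hsub : B.filter (fun a => supNorm (x - a) = k) ⊆ sphereF d x k := by
      intro a ha
      exact mem_sphereF hk1 (Finset.mem_filter.mp ha).2
    have hcard : (B.filter (fun a => supNorm (x - a) = k)).card ≤ (2*k+1)^d - (2*k-1)^d := by
      rw [← card_sphereF x hk1]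
      exact Finset.card_le_card hsub
    calc ((B.filter (fun a => supNorm (x - a) = k)).card : ℝ) * Hw d k
        ≤ (((2*k+1)^d - (2*k-1)^d : ℕ):ℝ) * Hw d k := by
          apply mul_le_mul_of_nonneg_right _ (Hw_nonneg d k)
          exact_mod_cast hcard
      _ ≤ (2*(d:ℝ)*3^(d-1)*2^(2*d)) * (((k:ℝ))^(d+1))⁻¹ := sphere_term_le hd hk1
  calc ∑ k ∈ Finset.Icc s M, ∑ a ∈ B.filter (fun a => supNorm (x - a) = k),
        Hw d (supNorm (x - a))
      ≤ ∑ k ∈ Finset.Icc s M, (2*(d:ℝ)*3^(d-1)*2^(2*d)) * (((k:ℝ))^(d+1))⁻¹ :=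
        Finset.sum_le_sum hterm
    _ = (2*(d:ℝ)*3^(d-1)*2^(2*d)) * ∑ k ∈ Finset.Icc s M, (((k:ℝ))^(d+1))⁻¹ := by
        rw [Finset.mul_sum]
    _ ≤ (2*(d:ℝ)*3^(d-1)*2^(2*d)) * (2 * (((s:ℝ))^d)⁻¹) := by
        apply mul_le_mul_of_nonneg_left _ (by positivity)
        obtain ⟨e, rfl⟩ : ∃ e, d = e + 1 := ⟨d - 1, by omega⟩
        exact sum_inv_pow_tail (e+1) hd s M hs

/-- Generic fiberwise counting bound. -/
lemma sum_le_of_fiber_card_le {α : Type*} [DecidableEq α] (B : Finset α) (g : α → ℕ)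
    (T : Finset ℕ) (hmap : ∀ x ∈ B, g x ∈ T) (c : ℕ)
    (hcard : ∀ t ∈ T, (B.filter (fun x => g x = t)).card ≤ c)
    (f : ℕ → ℝ) (hf : ∀ t, 0 ≤ f t) :
    ∑ x ∈ B, f (g x) ≤ (c:ℝ) * ∑ t ∈ T, f t := by
  rw [← Finset.sum_fiberwise_of_maps_to hmap (fun x => f (g x))]
  calc ∑ t ∈ T, ∑ x ∈ B.filter (fun x => g x = t), f (g x)
      ≤ ∑ t ∈ T, (c:ℝ) * f t := by
        apply Finset.sum_le_sum
        intro t ht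
        have heq : ∑ x ∈ B.filter (fun x => g x = t), f (g x)
            = (B.filter (fun x => g x = t)).card * f t := by
          rw [Finset.sum_congr rfl (fun x hx => by
            rw [(Finset.mem_filter.mp hx).2]), Finset.sum_const, nsmul_eq_mul]
        rw [heq]
        exact mul_le_mul_of_nonneg_right (by exact_mod_cast hcard t ht) (hf t)
    _ = (c:ℝ) * ∑ t ∈ T, f t := by rw [Finset.mul_sum]

/-- Cardinality of a box with one coordinate pinned. -/
lemma card_Icc_update {d : ℕ} (lo hi : Fin d → ℤ) (j : Fin d) (c : ℤ) (m : ℕ)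
    (hm : ∀ i, i ≠ j → (Finset.Icc (lo i) (hi i)).card = m) :
    (Finset.Icc (Function.update lo j c) (Function.update hi j c)).card ≤ m ^ (d-1) := by
  rw [Pi.card_Icc]
  rw [Fintype.prod_eq_mul_prod_compl j]
  have h1 : (Finset.Icc (Function.update lo j c j) (Function.update hi j c j)).card ≤ 1 := by
    simp [Function.update_self, Int.card_Icc]
  have h2 : ∀ i ∈ ({j}ᶜ : Finset (Fin d)),
      (Finset.Icc (Function.update lo j c i) (Function.update hi j c i)).card = m := by
    intro i hi'
    have hij : i ≠ j := by simpa using hi'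
    rw [Function.update_of_ne hij, Function.update_of_ne hij]
    exact hm i hij
  rw [Finset.prod_congr rfl h2, Finset.prod_const]
  have hcardc : ({j}ᶜ : Finset (Fin d)).card = d - 1 := by
    rw [Finset.card_compl]
    simp
  rw [hcardc]
  calc (Finset.Icc (Function.update lo j c j) (Function.update hi j c j)).card * m ^ (d-1)
      ≤ 1 * m ^ (d-1) := Nat.mul_le_mul_right _ h1
    _ = m ^ (d-1) := one_mul _

lemma card_near_le {d : ℕ} (x : Fin d → ℤ) (B : Finset (Fin d → ℤ)) :
    (B.filter (fun y => supNorm (x - y) ≤ 1)).card ≤ 3^d := by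
  have hsub : B.filter (fun y => supNorm (x - y) ≤ 1)
      ⊆ Finset.Icc (fun i => x i - 1) (fun i => x i + 1) := by
    intro y hy
    have hs := (Finset.mem_filter.mp hy).2
    rw [Finset.mem_Icc]
    constructor
    · intro i
      have h1 := le_trans (le_supNorm (x - y) i) hs
      have hxy : (x - y) i = x i - y i := rfl
      rw [hxy] at h1
      show x i - 1 ≤ y i
      omega
    · intro i
      have h1 := le_trans (le_supNorm (x - y) i) hs
      have hxy : (x - y) i = x i - y i := rfl
      rw [hxy] at h1
      show y i ≤ x i + 1
      omega
  calc (B.filter (fun y => supNorm (x - y) ≤ 1)).card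
      ≤ (Finset.Icc (fun i => x i - 1) (fun i => x i + 1)).card := Finset.card_le_card hsub
    _ = 3^d := by
        rw [Pi.card_Icc]
        have : ∀ i : Fin d, (Finset.Icc (x i - 1) (x i + 1)).card = 3 := by
          intro i; rw [Int.card_Icc]; omega
        simp [this]

lemma sval_exists {d : ℕ} {u v : Fin d → ℤ} {m : ℕ} (hm : 1 ≤ m) {j : Fin d}
    (hj : (u j - v j).natAbs = 1) :
    ∃ sval : (Fin d → ℤ) → ℕ,
      (∀ x ∈ boxF d v m, 1 ≤ sval x ∧ sval x ≤ m) ∧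
      (∀ x ∈ boxF d v m, ∀ a ∈ boxF d u m, sval x ≤ supNorm (x - a)) ∧
      (∀ t : ℕ, ((boxF d v m).filter (fun x => sval x = t)).card ≤ m ^ (d-1)) := by
  classical
  refine ⟨fun x => if v j ≤ u j then ((m:ℤ) * v j + m - x j).toNat
    else (x j - (m:ℤ) * v j + 1).toNat, ?_, ?_, ?_⟩
  · intro x hx
    simp only [boxF, Finset.mem_Icc, Pi.le_def] at hx
    have h1 : (m:ℤ) * v j ≤ x j := hx.1 j
    have h2 : x j ≤ (m:ℤ) * v j + m - 1 := hx.2 j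
    by_cases hc : v j ≤ u j <;> simp only [hc, if_true, if_false] <;> omega
  · intro x hx a ha
    simp only [boxF, Finset.mem_Icc, Pi.le_def] at hx ha
    have h1 : (m:ℤ) * v j ≤ x j := hx.1 j
    have h2 : x j ≤ (m:ℤ) * v j + m - 1 := hx.2 j
    have h3 : (m:ℤ) * u j ≤ a j := ha.1 j
    have h4 : a j ≤ (m:ℤ) * u j + m - 1 := ha.2 j
    have hxa : (x - a) j = x j - a j := rfl
    have hle := le_supNorm (x - a) j
    rw [hxa] at hle
    by_cases hc : v j ≤ u j
    · have huj : u j = v j + 1 := by omega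
      have hMM : (m:ℤ) * u j = (m:ℤ) * v j + m := by rw [huj]; ring
      refine le_trans ?_ hle
      simp only [hc, if_true]
      omega
    · have huj : u j = v j - 1 := by omega
      have hMM : (m:ℤ) * u j = (m:ℤ) * v j - m := by rw [huj]; ring
      refine le_trans ?_ hle
      simp only [hc, if_false]
      omega
  · intro t
    set c : ℤ := if v j ≤ u j then (m:ℤ) * v j + m - t else (m:ℤ) * v j + t - 1 with hc
    have hsub : (boxF d v m).filter
        (fun x => (if v j ≤ u j then ((m:ℤ) * v j + m - x j).toNat
          else (x j - (m:ℤ) * v j + 1).toNat) = t)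
        ⊆ Finset.Icc (Function.update (fun i => (m:ℤ) * v i) j c)
          (Function.update (fun i => (m:ℤ) * v i + m - 1) j c) := by
      intro x hx
      obtain ⟨hxB, hxt⟩ := Finset.mem_filter.mp hx
      simp only [boxF, Finset.mem_Icc, Pi.le_def] at hxB
      have h1 : (m:ℤ) * v j ≤ x j := hxB.1 j
      have h2 : x j ≤ (m:ℤ) * v j + m - 1 := hxB.2 j
      have hxj : x j = c := by
        rw [hc]
        by_cases hcc : v j ≤ u j <;> simp only [hcc, if_true, if_false] at hxt ⊢ <;> omega
      rw [Finset.mem_Icc]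
      constructor
      · intro i
        by_cases hij : i = j
        · subst hij; rw [Function.update_self]; exact le_of_eq hxj.symm
        · rw [Function.update_of_ne hij]; exact hxB.1 i
      · intro i
        by_cases hij : i = j
        · subst hij; rw [Function.update_self]; exact le_of_eq hxj
        · rw [Function.update_of_ne hij]; exact hxB.2 i
    calc ((boxF d v m).filter _).card
        ≤ _ := Finset.card_le_card hsub
      _ ≤ m ^ (d-1) := by
          apply card_Icc_update
          intro i hij
          rw [Int.card_Icc]
          omega

end S8

open S8 in
set_option maxHeartbeats 2000000 in
/-- There is a constant `C_d < ∞`, depending only on `d`, such that for all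
`β ≥ 0`, `m ≥ 2`, and boxes with `‖u−v‖_∞ = 1`, `‖v−w‖_∞ ≥ 2`, the probability that some
`x, y ∈ V_v^m` with `‖x−y‖_∞ ≤ 1` satisfy `x ∼ V_u^m` and `y ∼ V_w^m` is at most
`C_d β ⌈β⌉ log(m)/(‖v−w‖_∞^{2d} m)` if `d = 1`, and `C_d β ⌈β⌉/(‖v−w‖_∞^{2d} m)` if `d ≥ 2`. -/
theorem statement8 (d : ℕ) (hd : 1 ≤ d) :
    ∃ C : ℝ, 0 < C ∧
      ∀ β : ℝ, 0 ≤ β → ∀ m : ℕ, 2 ≤ m → ∀ u v w : Fin d → ℤ,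
        supNorm (u - v) = 1 → 2 ≤ supNorm (v - w) →
        ∀ P : Measure (PercConfig d), IsLRP d β P →
          P {ω | ∃ x ∈ latticeBox d v m, ∃ y ∈ latticeBox d v m,
                supNorm (x - y) ≤ 1 ∧
                (∃ a ∈ latticeBox d u m, x ≠ a ∧ ω s(x, a) = true) ∧
                (∃ b ∈ latticeBox d w m, y ≠ b ∧ ω s(y, b) = true)}
            ≤ ENNReal.ofReal (if d = 1 then
                C * β * (⌈β⌉ : ℝ) * Real.log m / ((supNorm (v - w) : ℝ) ^ (2 * d) * (m : ℝ))
              else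
                C * β * (⌈β⌉ : ℝ) / ((supNorm (v - w) : ℝ) ^ (2 * d) * (m : ℝ))) := by
  classical
  have hd0 : (0:ℝ) < (d:ℝ) := by exact_mod_cast hd
  refine ⟨3 * (3:ℝ)^d * 2^(2*d) * 2 * (2*(d:ℝ)*3^(d-1)*2^(2*d)), ?_, ?_⟩
  · have h1 : (0:ℝ) < 2*(d:ℝ)*3^(d-1)*2^(2*d) := by
      apply _root_.mul_pos (_root_.mul_pos (by linarith) (by positivity)) (by positivity)
    have h2 : (0:ℝ) < 3 * (3:ℝ)^d * 2^(2*d) * 2 := by positivity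
    exact _root_.mul_pos h2 h1
  intro β hβ0 m hm u v w huv hvw P hP
  set K := supNorm (v - w) with hKdef
  have hm1 : 1 ≤ m := by omega
  have hm0R : (0:ℝ) < (m:ℝ) := by exact_mod_cast (by omega : 0 < m)
  have hK0R : (0:ℝ) < (K:ℝ) := by exact_mod_cast (by omega : 0 < K)
  have hKR2 : (2:ℝ) ≤ (K:ℝ) := by exact_mod_cast hvw
  have hmR2 : (2:ℝ) ≤ (m:ℝ) := by exact_mod_cast hm
  -- distinctness of the three boxes
  obtain ⟨j, hj⟩ := exists_supNorm hd (u - v)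
  rw [huv] at hj
  have hj' : (u j - v j).natAbs = 1 := hj
  have hvu : v ≠ u := by
    intro h; rw [h] at hj'; simp at hj'
  have hvw' : v ≠ w := by
    intro h
    obtain ⟨i, hi⟩ := exists_supNorm hd (v - w)
    rw [← hKdef] at hi
    rw [h] at hi
    simp at hi
    omega
  have huw : u ≠ w := by
    intro h
    rw [← h] at hKdef
    rw [hKdef, ← supNorm_comm] at hvw
    omega
  obtain ⟨sval, hsval1, hsval2, hsval3⟩ := sval_exists hm1 hj'
  set Bv := boxF d v m with hBv
  set Bu := boxF d u m with hBu
  set Bw := boxF d w m with hBw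
  -- the family of elementary events
  set cond : (Fin d → ℤ) × (Fin d → ℤ) × (Fin d → ℤ) × (Fin d → ℤ) → Prop :=
    fun q => q.1 ∈ Bv ∧ q.2.1 ∈ Bv ∧ q.2.2.1 ∈ Bu ∧ q.2.2.2 ∈ Bw ∧
      supNorm (q.1 - q.2.1) ≤ 1 ∧ q.1 ≠ q.2.2.1 ∧ q.2.1 ≠ q.2.2.2 with hcond
  set S : (Fin d → ℤ) × (Fin d → ℤ) × (Fin d → ℤ) × (Fin d → ℤ) → Set (PercConfig d) :=
    fun q => {ω | cond q ∧ ω s(q.1, q.2.2.1) = true ∧ ω s(q.2.1, q.2.2.2) = true} with hS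
  set ρ : (Fin d → ℤ) × (Fin d → ℤ) × (Fin d → ℤ) × (Fin d → ℤ) → ℝ :=
    fun q => if cond q then pConn d β q.1 q.2.2.1 * pConn d β q.2.1 q.2.2.2 else 0 with hρ
  set Q : Finset ((Fin d → ℤ) × (Fin d → ℤ) × (Fin d → ℤ) × (Fin d → ℤ)) :=
    Bv ×ˢ Bv ×ˢ Bu ×ˢ Bw with hQ
  have hρnn : ∀ q, 0 ≤ ρ q := by
    intro q
    rw [hρ]
    dsimp only
    split
    · exact mul_nonneg (pConn_nonneg hβ0 _ _) (pConn_nonneg hβ0 _ _)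
    · exact le_refl 0
  have hPE : P {ω | ∃ x ∈ latticeBox d v m, ∃ y ∈ latticeBox d v m,
                supNorm (x - y) ≤ 1 ∧
                (∃ a ∈ latticeBox d u m, x ≠ a ∧ ω s(x, a) = true) ∧
                (∃ b ∈ latticeBox d w m, y ≠ b ∧ ω s(y, b) = true)}
      ≤ ENNReal.ofReal (∑ q ∈ Q, ρ q) := by
    have hsub : {ω : PercConfig d | ∃ x ∈ latticeBox d v m, ∃ y ∈ latticeBox d v m,
                supNorm (x - y) ≤ 1 ∧
                (∃ a ∈ latticeBox d u m, x ≠ a ∧ ω s(x, a) = true) ∧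
                (∃ b ∈ latticeBox d w m, y ≠ b ∧ ω s(y, b) = true)} ⊆ ⋃ q, S q := by
      intro ω hω
      obtain ⟨x, hx, y, hy, hnear, ⟨a, ha, hxa, ho1⟩, ⟨b, hb, hyb, ho2⟩⟩ := hω
      refine Set.mem_iUnion.mpr ⟨(x, y, a, b), ?_⟩
      exact ⟨⟨mem_boxF.mpr hx, mem_boxF.mpr hy, mem_boxF.mpr ha, mem_boxF.mpr hb,
        hnear, hxa, hyb⟩, ho1, ho2⟩
    have hSle : ∀ q, P (S q) ≤ ENNReal.ofReal (ρ q) := by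
      intro q
      by_cases hc : cond q
      · have hSeq : S q = {ω | ω s(q.1, q.2.2.1) = true} ∩ {ω | ω s(q.2.1, q.2.2.2) = true} := by
          ext ω; simp only [hS, Set.mem_setOf_eq, Set.mem_inter_iff]; tauto
        have hc2 : q.1 ∈ Bv ∧ q.2.1 ∈ Bv ∧ q.2.2.1 ∈ Bu ∧ q.2.2.2 ∈ Bw ∧
            supNorm (q.1 - q.2.1) ≤ 1 ∧ q.1 ≠ q.2.2.1 ∧ q.2.1 ≠ q.2.2.2 := hc
        obtain ⟨h1, h2, h3, h4, h5, h6, h7⟩ := hc2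
        have hedge : s(q.1, q.2.2.1) ≠ s(q.2.1, q.2.2.2) :=
          edge_ne hm1 hvu hvw' huw h1 h2 h3 h4
        rw [hSeq, measure_pair_le hP h6 h7 hedge, hρ]
        dsimp only
        rw [if_pos hc, ENNReal.ofReal_mul (pConn_nonneg hβ0 _ _)]
      · have hSeq : S q = ∅ := by
          ext ω; simp only [hS, Set.mem_setOf_eq, Set.mem_empty_iff_false, iff_false]
          tauto
        rw [hSeq]
        simp
    have hzero : ∀ q ∉ Q, ENNReal.ofReal (ρ q) = 0 := by
      intro q hq
      have : ¬ cond q := by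
        rw [hQ] at hq
        simp only [Finset.mem_product] at hq
        rw [hcond]
        tauto
      rw [hρ]
      dsimp only
      rw [if_neg this]
      simp
    calc P {ω | ∃ x ∈ latticeBox d v m, ∃ y ∈ latticeBox d v m,
                supNorm (x - y) ≤ 1 ∧
                (∃ a ∈ latticeBox d u m, x ≠ a ∧ ω s(x, a) = true) ∧
                (∃ b ∈ latticeBox d w m, y ≠ b ∧ ω s(y, b) = true)}
        ≤ P (⋃ q, S q) := measure_mono hsub
      _ ≤ ∑' q, P (S q) := measure_iUnion_le S
      _ ≤ ∑' q, ENNReal.ofReal (ρ q) := ENNReal.tsum_le_tsum hSle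
      _ = ∑ q ∈ Q, ENNReal.ofReal (ρ q) := tsum_eq_sum hzero
      _ = ENNReal.ofReal (∑ q ∈ Q, ρ q) :=
          (ENNReal.ofReal_sum_of_nonneg (fun q _ => hρnn q)).symm
  -- pointwise bound for far pairs
  have hF2pt : ∀ y ∈ Bv, ∀ b ∈ Bw, pConn d β y b ≤ β * ((((m:ℝ)*(K:ℝ)/2))^(2*d))⁻¹ := by
    intro y hy b hb
    have hdist := dist_boxes_lower hd hKdef.symm hy hb
    have hr0 : (0:ℝ) < (m:ℝ)*(K:ℝ)/2 := by positivity
    apply pConn_le_far hd hβ0 hr0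
    have hcast : ((m:ℤ) * K - m + 1 : ℤ) ≤ ((supNorm (y - b) : ℤ)) := hdist
    have hcastR : (m:ℝ) * (K:ℝ) - (m:ℝ) + 1 ≤ ((supNorm (y - b)):ℝ) := by
      exact_mod_cast hcast
    nlinarith
  rcases eq_or_lt_of_le hβ0 with hβeq | hβpos
  · -- β = 0 : all far edges are closed
    have hβ' : β = 0 := hβeq.symm
    have hzero : ∑ q ∈ Q, ρ q = 0 := by
      apply Finset.sum_eq_zero
      intro q hq
      rw [hρ]
      dsimp only
      split
      · rename_i hc
        have hc2 : q.1 ∈ Bv ∧ q.2.1 ∈ Bv ∧ q.2.2.1 ∈ Bu ∧ q.2.2.2 ∈ Bw ∧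
            supNorm (q.1 - q.2.1) ≤ 1 ∧ q.1 ≠ q.2.2.1 ∧ q.2.1 ≠ q.2.2.2 := hc
        obtain ⟨h1, h2, h3, h4, h5, h6, h7⟩ := hc2
        have hle := hF2pt q.2.1 h2 q.2.2.2 h4
        rw [hβ', zero_mul] at hle
        rw [hβ']
        have hge := pConn_nonneg (le_refl (0:ℝ)) q.2.1 q.2.2.2
        have : pConn d 0 q.2.1 q.2.2.2 = 0 := le_antisymm hle hge
        rw [this, mul_zero]
      · rfl
    rw [hzero] at hPE
    simp only [ENNReal.ofReal_zero] at hPE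
    exact le_trans hPE zero_le
  -- β > 0 from now on
  have hceil0 : (0:ℝ) ≤ (⌈β⌉ : ℝ) := by
    have := Int.ceil_pos.mpr hβpos
    have : (0:ℤ) ≤ ⌈β⌉ := le_of_lt this
    exact_mod_cast this
  set A : ℝ := 2*(d:ℝ)*3^(d-1)*2^(2*d) with hAdef
  have hAnn : 0 ≤ A := by
    rw [hAdef]; positivity
  -- bound on the sum over a of pConn x a
  have hF1 : ∀ x ∈ Bv, ∑ a ∈ Bu, pConn d β x a
      ≤ (⌈β⌉:ℝ) * (A * (2 * (((sval x : ℕ):ℝ)^d)⁻¹)) := by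
    intro x hx
    calc ∑ a ∈ Bu, pConn d β x a
        ≤ ∑ a ∈ Bu, (⌈β⌉:ℝ) * Hw d (supNorm (x - a)) :=
          Finset.sum_le_sum (fun a _ => pConn_le_Hw hd hβpos x a)
      _ = (⌈β⌉:ℝ) * ∑ a ∈ Bu, Hw d (supNorm (x - a)) := (Finset.mul_sum _ _ _).symm
      _ ≤ (⌈β⌉:ℝ) * (A * (2 * (((sval x : ℕ):ℝ)^d)⁻¹)) := by
          apply mul_le_mul_of_nonneg_left _ hceil0
          exact sum_Hw_le hd x Bu (sval x) (2*m) (hsval1 x hx).1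
            (fun a ha => hsval2 x hx a ha)
            (fun a ha => dist_boxes_upper hm1 huv hx ha)
  -- bound on the sum over b of pConn y b
  have hF2 : ∀ y ∈ Bv, ∑ b ∈ Bw, pConn d β y b
      ≤ ((m:ℝ)^d) * (β * ((((m:ℝ)*(K:ℝ)/2))^(2*d))⁻¹) := by
    intro y hy
    calc ∑ b ∈ Bw, pConn d β y b
        ≤ Bw.card • (β * ((((m:ℝ)*(K:ℝ)/2))^(2*d))⁻¹) :=
          Finset.sum_le_card_nsmul Bw _ _ (fun b hb => hF2pt y hy b hb)
      _ = ((m:ℝ)^d) * (β * ((((m:ℝ)*(K:ℝ)/2))^(2*d))⁻¹) := by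
          rw [nsmul_eq_mul, hBw, card_boxF w hm1]
          push_cast
          ring
  -- set up remaining abbreviations
  refine le_trans hPE (ENNReal.ofReal_le_ofReal ?_)
  set L : ℝ := if d = 1 then 3 * Real.log m else 2 with hL
  have hSL : ∑ t ∈ Finset.Icc 1 m, (((t:ℕ):ℝ)^d)⁻¹ ≤ L := by
    rw [hL]
    by_cases hd1 : d = 1
    · rw [if_pos hd1, hd1]
      simp only [pow_one]
      have h1 := sum_harmonic_le m hm1
      have hlog2 : (0.6931471803:ℝ) < Real.log 2 := Real.log_two_gt_d9
      have hlogm : Real.log 2 ≤ Real.log m := by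
        apply Real.log_le_log (by norm_num)
        exact_mod_cast hm
      linarith
    · rw [if_neg hd1]
      have hd2 : 2 ≤ d := by omega
      have hstep : ∀ t ∈ Finset.Icc 1 m, (((t:ℕ):ℝ)^d)⁻¹ ≤ (((t:ℕ):ℝ)^2)⁻¹ := by
        intro t ht
        have ht1 : (1:ℝ) ≤ (t:ℝ) := by exact_mod_cast (Finset.mem_Icc.mp ht).1
        apply inv_anti₀ (by positivity)
        exact pow_le_pow_right₀ ht1 hd2
      have htail := sum_inv_pow_tail 1 (le_refl 1) 1 m (le_refl 1)
      norm_num at htail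
      calc ∑ t ∈ Finset.Icc 1 m, (((t:ℕ):ℝ)^d)⁻¹
          ≤ ∑ t ∈ Finset.Icc 1 m, (((t:ℕ):ℝ)^2)⁻¹ := Finset.sum_le_sum hstep
        _ ≤ 2 := htail
  have hLnn : 0 ≤ L := by
    rw [hL]
    split
    · have : (0:ℝ) < Real.log m := Real.log_pos (by exact_mod_cast hm)
      linarith
    · norm_num
  have hsum_sval : ∑ x ∈ Bv, (((sval x : ℕ):ℝ)^d)⁻¹
      ≤ ((m^(d-1) : ℕ):ℝ) * ∑ t ∈ Finset.Icc 1 m, (((t:ℕ):ℝ)^d)⁻¹ :=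
    sum_le_of_fiber_card_le Bv sval (Finset.Icc 1 m)
      (fun x hx => Finset.mem_Icc.mpr (hsval1 x hx)) (m^(d-1))
      (fun t _ => hsval3 t) (fun t => (((t:ℕ):ℝ)^d)⁻¹) (fun t => by positivity)
  set c2 : ℝ := ((m:ℝ)^d) * (β * ((((m:ℝ)*(K:ℝ)/2))^(2*d))⁻¹) with hc2
  have hc2nn : 0 ≤ c2 := by
    rw [hc2]
    have : (0:ℝ) < (m:ℝ)*(K:ℝ)/2 := by positivity
    positivity
  set c1 : (Fin d → ℤ) → ℝ := fun x => (⌈β⌉:ℝ) * (A * (2 * (((sval x : ℕ):ℝ)^d)⁻¹)) with hc1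
  have hc1nn : ∀ x, 0 ≤ c1 x := by
    intro x
    rw [hc1]
    dsimp only
    apply mul_nonneg hceil0
    positivity
  -- per (x,y) bound
  have hxy : ∀ x ∈ Bv, ∀ y ∈ Bv, ∑ a ∈ Bu, ∑ b ∈ Bw, ρ (x,y,a,b)
      ≤ (if supNorm (x-y) ≤ 1 then c1 x * c2 else 0) := by
    intro x hx y hy
    by_cases hnear : supNorm (x - y) ≤ 1
    · rw [if_pos hnear]
      have hterm : ∀ a ∈ Bu, ∀ b ∈ Bw, ρ (x,y,a,b) ≤ pConn d β x a * pConn d β y b := by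
        intro a ha b hb
        rw [hρ]
        dsimp only
        split
        · exact le_refl _
        · exact mul_nonneg (pConn_nonneg hβ0 _ _) (pConn_nonneg hβ0 _ _)
      calc ∑ a ∈ Bu, ∑ b ∈ Bw, ρ (x,y,a,b)
          ≤ ∑ a ∈ Bu, ∑ b ∈ Bw, pConn d β x a * pConn d β y b :=
            Finset.sum_le_sum (fun a ha => Finset.sum_le_sum (fun b hb => hterm a ha b hb))
        _ = (∑ a ∈ Bu, pConn d β x a) * (∑ b ∈ Bw, pConn d β y b) :=
            (Finset.sum_mul_sum _ _ _ _).symm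
        _ ≤ c1 x * c2 := by
            apply mul_le_mul (hF1 x hx) (hF2 y hy)
              (Finset.sum_nonneg (fun b _ => pConn_nonneg hβ0 _ _)) (hc1nn x)
    · rw [if_neg hnear]
      apply le_of_eq
      apply Finset.sum_eq_zero
      intro a _
      apply Finset.sum_eq_zero
      intro b _
      rw [hρ]
      dsimp only
      exact if_neg (fun hcnd => hnear hcnd.2.2.2.2.1)
  have hy3 : ∀ x ∈ Bv, ∑ y ∈ Bv, (if supNorm (x - y) ≤ 1 then c1 x * c2 else 0)
      ≤ 3^d * (c1 x * c2) := by
    intro x hx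
    rw [← Finset.sum_filter, Finset.sum_const, nsmul_eq_mul]
    apply mul_le_mul_of_nonneg_right _ (mul_nonneg (hc1nn x) hc2nn)
    have := card_near_le x Bv
    calc ((Bv.filter (fun y => supNorm (x - y) ≤ 1)).card : ℝ) ≤ ((3^d : ℕ):ℝ) := by
          exact_mod_cast this
      _ = (3:ℝ)^d := by push_cast; ring
  have hprefnn : 0 ≤ (3:ℝ)^d * c2 * (⌈β⌉:ℝ) * (A*2) :=
    mul_nonneg (mul_nonneg (mul_nonneg (by positivity) hc2nn) hceil0)
      (mul_nonneg hAnn (by norm_num))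
  have hchain : ∑ q ∈ Q, ρ q ≤ ((3:ℝ)^d * c2 * (⌈β⌉:ℝ) * (A*2)) * (((m^(d-1):ℕ):ℝ) * L) := by
    calc ∑ q ∈ Q, ρ q
        = ∑ x ∈ Bv, ∑ y ∈ Bv, ∑ a ∈ Bu, ∑ b ∈ Bw, ρ (x,y,a,b) := by
          rw [hQ]
          simp only [Finset.sum_product]
      _ ≤ ∑ x ∈ Bv, ∑ y ∈ Bv, (if supNorm (x-y) ≤ 1 then c1 x * c2 else 0) :=
          Finset.sum_le_sum (fun x hx => Finset.sum_le_sum (fun y hy => hxy x hx y hy))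
      _ ≤ ∑ x ∈ Bv, 3^d * (c1 x * c2) := Finset.sum_le_sum (fun x hx => hy3 x hx)
      _ = ((3:ℝ)^d * c2 * (⌈β⌉:ℝ) * (A*2)) * ∑ x ∈ Bv, (((sval x : ℕ):ℝ)^d)⁻¹ := by
          rw [Finset.mul_sum]
          apply Finset.sum_congr rfl
          intro x _
          rw [hc1]
          dsimp only
          ring
      _ ≤ ((3:ℝ)^d * c2 * (⌈β⌉:ℝ) * (A*2)) * (((m^(d-1):ℕ):ℝ) * L) := by
          apply mul_le_mul_of_nonneg_left _ hprefnn
          calc ∑ x ∈ Bv, (((sval x : ℕ):ℝ)^d)⁻¹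
              ≤ ((m^(d-1):ℕ):ℝ) * ∑ t ∈ Finset.Icc 1 m, (((t:ℕ):ℝ)^d)⁻¹ := hsum_sval
            _ ≤ ((m^(d-1):ℕ):ℝ) * L := mul_le_mul_of_nonneg_left hSL (by positivity)
  refine le_trans hchain ?_
  -- final algebra
  have hK0 : (K:ℝ) ≠ 0 := ne_of_gt hK0R
  have hm0 : (m:ℝ) ≠ 0 := ne_of_gt hm0R
  have hcastpow : ((m^(d-1):ℕ):ℝ) = (m:ℝ)^(d-1) := by push_cast; ring
  rw [hcastpow, hc2, hL, hAdef]
  by_cases hd1 : d = 1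
  · subst hd1
    rw [if_pos rfl, if_pos rfl]
    apply le_of_eq
    norm_num
    field_simp
    ring
  · rw [if_neg hd1, if_neg hd1]
    obtain ⟨e, rfl⟩ : ∃ e, d = e + 2 := ⟨d - 2, by omega⟩
    have hd1' : (e+2) - 1 = e + 1 := rfl
    rw [hd1']
    have hnum : 0 ≤ 3*(3:ℝ)^(e+2)*2^(2*(e+2))*2*(2*((e+2:ℕ):ℝ)*3^(e+1)*2^(2*(e+2)))*β*(⌈β⌉:ℝ) :=
      mul_nonneg (mul_nonneg (by positivity) hβ0) hceil0
    have hden : (0:ℝ) < (K:ℝ)^(2*(e+2)) * m := by positivity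
    have hRHSnn : 0 ≤ 3*(3:ℝ)^(e+2)*2^(2*(e+2))*2*(2*((e+2:ℕ):ℝ)*3^(e+1)*2^(2*(e+2)))*β*(⌈β⌉:ℝ)
        / ((K:ℝ)^(2*(e+2)) * m) := div_nonneg hnum (le_of_lt hden)
    have heq : (3:ℝ)^(e+2) * ((m:ℝ)^(e+2) * (β * (((m:ℝ)*(K:ℝ)/2)^(2*(e+2)))⁻¹)) * (⌈β⌉:ℝ)
          * ((2*((e+2:ℕ):ℝ)*3^(e+1)*2^(2*(e+2))) * 2) * ((m:ℝ)^(e+1) * 2)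
        = (2/3) * (3*(3:ℝ)^(e+2)*2^(2*(e+2))*2*(2*((e+2:ℕ):ℝ)*3^(e+1)*2^(2*(e+2)))*β*(⌈β⌉:ℝ)
          / ((K:ℝ)^(2*(e+2)) * m)) := by
      have hmK : ((m:ℝ)*(K:ℝ)/2) ≠ 0 := by positivity
      rw [div_pow]
      field_simp
      ring
    rw [heq]
    linarith [hRHSnn]
end
end
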